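/- arXiv:2510.23193 — 3 statements merged into one kernel-verified Lean document; each statement's English description precedes it below -/
import Mathlib

section
/- Let L be an even unimodular lattice, S ⊆ L a primitive sublattice with orthogonal complement K = S^⊥, and φ: S → S an isometry whose induced action on the discriminant group A_S is ±id. Then φ extends to an isometry φ̃ of L with φ̃|_K = ±id_K (with matching sign). -/
section Defs

variable {V : Type*} [AddCommGroup V] [Module ℚ V]

/-- The dual lattice `S∨ = {v ∈ S ⊗ ℚ | B(v, S) ⊆ ℤ}` of a lattice `S`, inside the
`ℚ`-span of `S`. -/
def dualLat (B : V →ₗ[ℚ] V →ₗ[ℚ] ℚ) (L : Submodule ℤ V) : Submodule ℤ V where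
  carrier := {v | v ∈ Submodule.span ℚ (L : Set V) ∧ ∀ w ∈ L, ∃ n : ℤ, B v w = (n : ℚ)}
  add_mem' := by
    rintro a b ⟨ha, ha'⟩ ⟨hb, hb'⟩
    refine ⟨Submodule.add_mem _ ha hb, fun w hw => ?_⟩
    obtain ⟨n, hn⟩ := ha' w hw
    obtain ⟨m, hm⟩ := hb' w hw
    exact ⟨n + m, by push_cast [map_add, LinearMap.add_apply, hn, hm]; ring⟩
  zero_mem' := ⟨Submodule.zero_mem _, fun w hw => ⟨0, by simp⟩⟩
  smul_mem' := by
    rintro c a ⟨ha, ha'⟩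
    constructor
    · rw [← Int.cast_smul_eq_zsmul ℚ]
      exact Submodule.smul_mem _ _ ha
    · intro w hw
      obtain ⟨n, hn⟩ := ha' w hw
      refine ⟨c * n, ?_⟩
      rw [← Int.cast_smul_eq_zsmul ℚ, map_smul, LinearMap.smul_apply, smul_eq_mul, hn]
      push_cast
      ring

/-- The orthogonal complement in `L` of a sublattice `S`. -/
def orthoIn (B : V →ₗ[ℚ] V →ₗ[ℚ] ℚ) (L S : Submodule ℤ V) : Submodule ℤ V where
  carrier := {v | v ∈ L ∧ ∀ s ∈ S, B v s = 0}
  add_mem' := by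
    rintro a b ⟨ha, ha'⟩ ⟨hb, hb'⟩
    exact ⟨Submodule.add_mem _ ha hb,
      fun s hs => by simp [map_add, LinearMap.add_apply, ha' s hs, hb' s hs]⟩
  zero_mem' := ⟨Submodule.zero_mem _, fun s hs => by simp⟩
  smul_mem' := by
    rintro c a ⟨ha, ha'⟩
    refine ⟨Submodule.smul_mem _ _ ha, fun s hs => ?_⟩
    rw [← Int.cast_smul_eq_zsmul ℚ, map_smul, LinearMap.smul_apply, smul_eq_mul,
      ha' s hs, mul_zero]

end Defs

section Aux
variable {V : Type*} [AddCommGroup V] [Module ℚ V]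

lemma int_smul_of_mem_span {S : Submodule ℤ V} {x : V}
    (hx : x ∈ Submodule.span ℚ (S : Set V)) : ∃ n : ℤ, n ≠ 0 ∧ n • x ∈ S := by
  induction hx using Submodule.span_induction with
  | mem x hxS => exact ⟨1, one_ne_zero, by simpa using hxS⟩
  | zero => exact ⟨1, one_ne_zero, by simp⟩
  | add x y _ _ hx hy =>
      obtain ⟨n, hn, hnx⟩ := hx
      obtain ⟨m, hm, hmy⟩ := hy
      refine ⟨n * m, mul_ne_zero hn hm, ?_⟩
      have h : (n * m) • (x + y) = m • (n • x) + n • (m • y) := by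
        rw [smul_add]; rw [smul_smul, smul_smul]; ring_nf
      rw [h]
      exact Submodule.add_mem _ (Submodule.smul_mem _ _ hnx) (Submodule.smul_mem _ _ hmy)
  | smul q x _ hx =>
      obtain ⟨n, hn, hnx⟩ := hx
      refine ⟨(q.den : ℤ) * n, mul_ne_zero (by exact_mod_cast q.den_nz) hn, ?_⟩
      have h : ((q.den : ℤ) * n) • (q • x) = q.num • (n • x) := by
        rw [← Int.cast_smul_eq_zsmul ℚ ((q.den : ℤ) * n), ← Int.cast_smul_eq_zsmul ℚ q.num,
          ← Int.cast_smul_eq_zsmul ℚ n, smul_smul, smul_smul]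
        congr 1
        push_cast
        have hd : q * (q.den : ℚ) = (q.num : ℚ) := Rat.mul_den_eq_num q
        linear_combination (n : ℚ) * hd
      rw [h]
      exact Submodule.smul_mem _ _ hnx

end Aux


set_option maxHeartbeats 2000000 in
/-- Let `L` be an even unimodular lattice, `S ⊆ L` a primitive sublattice
with orthogonal complement `K = S^⊥` (here `orthoIn B L S`), and let `φ` be an isometry of
`S` whose induced action on the discriminant group `A_S = S∨/S` is `± id`.  (The isometry
is encoded as a linear automorphism `ψ` of the ambient space restricting to `φ` on `S`:
`ψ(S) = S`, `ψ` preserves `B` on `S`; its ℚ-linear extension to `S ⊗ ℚ` is then determined,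
and the hypothesis `disc φ = ε·id`, `ε = ±1`, reads `ψ x - ε x ∈ S` for all `x ∈ S∨`.)
Then `φ` extends to an isometry `Φ` of `L` with `Φ|_K = ε · id` (matching sign). -/
theorem stmt8 {V : Type*} [AddCommGroup V] [Module ℚ V] [FiniteDimensional ℚ V]
    (B : V →ₗ[ℚ] V →ₗ[ℚ] ℚ)
    (hsymm : ∀ v w, B v w = B w v)
    (hnondeg : ∀ v, (∀ w, B v w = 0) → v = 0)
    (L : Submodule ℤ V) (hfg : L.FG)
    (hfull : Submodule.span ℚ (L : Set V) = ⊤)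
    (hint : ∀ v ∈ L, ∀ w ∈ L, ∃ n : ℤ, B v w = (n : ℚ))
    (heven : ∀ v ∈ L, ∃ n : ℤ, B v v = 2 * (n : ℚ))
    (hunimodular : dualLat B L ≤ L)
    (S : Submodule ℤ V) (hSL : S ≤ L)
    (hSprim : ∀ x ∈ L, ∀ n : ℤ, n ≠ 0 → n • x ∈ S → x ∈ S)
    (ψ : V ≃ₗ[ℚ] V)
    (hψS : Submodule.map (ψ.toLinearMap.restrictScalars ℤ) S = S)
    (hψB : ∀ x ∈ S, ∀ y ∈ S, B (ψ x) (ψ y) = B x y)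
    (ε : ℤ) (hε : ε = 1 ∨ ε = -1)
    (hdisc : ∀ x ∈ dualLat B S, ψ x - (ε : ℚ) • x ∈ S) :
    ∃ Φ : V ≃ₗ[ℚ] V,
      (∀ v w, B (Φ v) (Φ w) = B v w) ∧
      Submodule.map (Φ.toLinearMap.restrictScalars ℤ) L = L ∧
      (∀ s ∈ S, Φ s = ψ s) ∧
      (∀ x ∈ orthoIn B L S, Φ x = (ε : ℚ) • x) := by
  classical
  have hεZ : ε * ε = 1 := by rcases hε with h | h <;> subst h <;> norm_num
  have hεQ : (ε : ℚ) * (ε : ℚ) = 1 := by exact_mod_cast congrArg (fun n : ℤ => (n : ℚ)) hεZ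
  set W : Submodule ℚ V := Submodule.span ℚ (S : Set V) with hWdef
  have hSsubW : ∀ s ∈ S, s ∈ W := fun s hs => Submodule.subset_span hs
  have hψS' : ∀ s ∈ S, ψ s ∈ S := by
    intro s hs
    rw [← hψS]; exact ⟨s, hs, rfl⟩
  have hψiS : ∀ s ∈ S, ψ.symm s ∈ S := by
    intro s hs
    rw [← hψS] at hs
    obtain ⟨t, ht, hts⟩ := hs
    have : ψ t = s := hts
    rw [← this, ψ.symm_apply_apply]; exact ht
  have hψW : ∀ x ∈ W, ψ x ∈ W := by
    intro x hx
    induction hx using Submodule.span_induction with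
    | mem z hz => exact hSsubW _ (hψS' z hz)
    | zero => simp
    | add a b _ _ ha hb => rw [map_add]; exact Submodule.add_mem _ ha hb
    | smul q a _ ha => rw [map_smul]; exact Submodule.smul_mem _ _ ha
  have hψiW : ∀ x ∈ W, ψ.symm x ∈ W := by
    intro x hx
    induction hx using Submodule.span_induction with
    | mem z hz => exact hSsubW _ (hψiS z hz)
    | zero => simp
    | add a b _ _ ha hb => rw [map_add]; exact Submodule.add_mem _ ha hb
    | smul q a _ ha => rw [map_smul]; exact Submodule.smul_mem _ _ ha
  have hψBW : ∀ x ∈ W, ∀ y ∈ W, B (ψ x) (ψ y) = B x y := by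
    intro x hx
    induction hx using Submodule.span_induction with
    | mem s hs =>
        intro y hy
        induction hy using Submodule.span_induction with
        | mem t ht => exact hψB s hs t ht
        | zero => simp
        | add a b _ _ ha hb => simp only [map_add, ha, hb]
        | smul q a _ ha => simp only [map_smul, smul_eq_mul, ha]
    | zero => intro y _; simp
    | add a b _ _ ha hb =>
        intro y hy
        simp only [map_add, LinearMap.add_apply, ha y hy, hb y hy]
    | smul q a _ ha =>
        intro y hy
        simp only [map_smul, LinearMap.smul_apply, smul_eq_mul, ha y hy]
  have hdmem : ∀ x, x ∈ dualLat B S ↔ x ∈ W ∧ ∀ s ∈ S, ∃ n : ℤ, B x s = (n : ℚ) :=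
    fun x => Iff.rfl
  have hψdual : ∀ x ∈ dualLat B S, ψ x ∈ dualLat B S := by
    intro x hx
    obtain ⟨hxW, hxI⟩ := (hdmem x).1 hx
    refine (hdmem _).2 ⟨hψW x hxW, fun s hs => ?_⟩
    obtain ⟨n, hn⟩ := hxI (ψ.symm s) (hψiS s hs)
    refine ⟨n, ?_⟩
    have h2 : B (ψ x) (ψ (ψ.symm s)) = B x (ψ.symm s) :=
      hψBW x hxW _ (hSsubW _ (hψiS s hs))
    rw [ψ.apply_symm_apply] at h2
    rw [h2, hn]
  have hψidual : ∀ x ∈ dualLat B S, ψ.symm x ∈ dualLat B S := by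
    intro x hx
    obtain ⟨hxW, hxI⟩ := (hdmem x).1 hx
    refine (hdmem _).2 ⟨hψiW x hxW, fun s hs => ?_⟩
    obtain ⟨n, hn⟩ := hxI (ψ s) (hψS' s hs)
    refine ⟨n, ?_⟩
    have h2 : B (ψ (ψ.symm x)) (ψ s) = B (ψ.symm x) s :=
      hψBW _ (hψiW x hxW) s (hSsubW s hs)
    rw [ψ.apply_symm_apply] at h2
    rw [← h2, hn]
  have hdisc' : ∀ x ∈ dualLat B S, ψ.symm x - (ε : ℚ) • x ∈ S := by
    intro x hx
    have h1 := hdisc _ (hψidual x hx)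
    rw [ψ.apply_symm_apply] at h1
    have h2 : ψ.symm x - (ε : ℚ) • x = ((-ε : ℤ) : ℚ) • (x - (ε : ℚ) • ψ.symm x) := by
      rw [smul_sub, smul_smul]
      push_cast
      have h4 : (-(ε : ℚ)) * (ε : ℚ) = -1 := by linear_combination -hεQ
      rw [h4]
      module
    rw [h2, Int.cast_smul_eq_zsmul]
    exact Submodule.smul_mem _ _ h1
  have hPrim : ∀ v ∈ L, v ∈ W → v ∈ S := by
    intro v hvL hvW
    obtain ⟨n, hn, hnv⟩ := int_smul_of_mem_span hvW
    exact hSprim v hvL n hn hnv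

  -- bilinear form machinery
  have hrefl : LinearMap.BilinForm.IsRefl B := fun x y h => by rw [hsymm]; exact h
  have hnd : LinearMap.BilinForm.Nondegenerate B :=
    ⟨hnondeg, fun y h => hnondeg y (fun x => by rw [hsymm]; exact h x)⟩
  set N : Submodule ℚ V := LinearMap.BilinForm.orthogonal B W with hNdef
  have hNiff : ∀ x, x ∈ N ↔ ∀ w ∈ W, B w x = 0 := fun x => Iff.rfl
  have hNW : LinearMap.BilinForm.orthogonal B N = W :=
    LinearMap.BilinForm.orthogonal_orthogonal hnd hrefl W
  have hWiff : ∀ x, x ∈ W ↔ ∀ n ∈ N, B n x = 0 := by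
    intro x
    rw [← hNW]
    exact Iff.rfl
  -- span of L is everything
  have hLspan : ∀ (x : V) (P : V → Prop), (∀ v ∈ L, P v) → (P 0) →
      (∀ a b, P a → P b → P (a + b)) → (∀ (q : ℚ) a, P a → P (q • a)) → P x := by
    intro x P hmem h0 hadd hsmul
    have hx : x ∈ Submodule.span ℚ (L : Set V) := by rw [hfull]; trivial
    induction hx using Submodule.span_induction with
    | mem z hz => exact hmem z hz
    | zero => exact h0
    | add a b _ _ ha hb => exact hadd a b ha hb
    | smul q a _ ha => exact hsmul q a ha
  -- fact B : ψ = ε on W ⊓ N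
  have factB : ∀ x, x ∈ W → x ∈ N → ψ x = (ε : ℚ) • x := by
    intro x hxW hxN
    have hqy : ∀ q : ℚ, q • (ψ x - (ε : ℚ) • x) ∈ S := by
      intro q
      have hqx : q • x ∈ dualLat B S := by
        refine (hdmem _).2 ⟨Submodule.smul_mem _ _ hxW, fun s hs => ⟨0, ?_⟩⟩
        rw [map_smul, LinearMap.smul_apply, smul_eq_mul]
        rw [hsymm, ((hNiff x).1 hxN) s (hSsubW s hs), mul_zero]
        norm_num
      have h1 := hdisc _ hqx
      rw [map_smul] at h1
      have h2 : q • (ψ x - (ε:ℚ) • x) = q • ψ x - (ε:ℚ) • (q • x) := by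
        rw [smul_sub, smul_comm]
      rw [h2]
      exact h1
    have hy0 : ψ x - (ε : ℚ) • x = 0 := by
      by_contra hyne
      have hex : ∃ v ∈ L, B (ψ x - (ε : ℚ) • x) v ≠ 0 := by
        by_contra hall
        push_neg at hall
        apply hyne
        apply hnondeg
        intro w
        refine hLspan w (fun v => B (ψ x - (ε:ℚ) • x) v = 0) hall (by simp) ?_ ?_
        · intro a b ha hb; rw [map_add, ha, hb, add_zero]
        · intro q a ha; rw [map_smul, smul_eq_mul, ha, mul_zero]
      obtain ⟨v, hvL, hBv⟩ := hex
      obtain ⟨n, hn⟩ := hint _ (hSL (hqy (1 / (2 * B (ψ x - (ε:ℚ) • x) v)))) v hvL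
      rw [map_smul, LinearMap.smul_apply, smul_eq_mul] at hn
      rw [one_div, inv_mul_eq_div, div_eq_iff (mul_ne_zero two_ne_zero hBv)] at hn
      have h6 : (1 - 2 * (n:ℚ)) * B (ψ x - (ε:ℚ) • x) v = 0 := by linear_combination hn
      rcases mul_eq_zero.mp h6 with h7 | h7
      · have h8 : (2 * n : ℤ) = 1 := by
          exact_mod_cast (by linear_combination -h7 : (2 * (n:ℚ)) = 1)
        omega
      · exact hBv h7
    have := sub_eq_zero.mp hy0
    exact this
  have factB' : ∀ x, x ∈ W → x ∈ N → ψ.symm x = (ε : ℚ) • x := by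
    intro x hxW hxN
    have h := factB x hxW hxN
    have h1 : x = (ε : ℚ) • ψ.symm x := by
      have h2 := congrArg (fun z => ψ.symm z) h
      simp only [ψ.symm_apply_apply, map_smul] at h2
      exact h2
    have h3 := congrArg (fun z => (ε:ℚ) • z) h1
    simp only [smul_smul, hεQ, one_smul] at h3
    exact h3.symm

  -- helper for integer smul in ℚ-submodules
  have hzsm : ∀ (P : Submodule ℚ V) (z : ℤ) (x : V), x ∈ P → z • x ∈ P := by
    intro P z x hx
    rw [← Int.cast_smul_eq_zsmul ℚ]
    exact P.smul_mem _ hx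
  set X : Submodule ℚ V := W ⊔ N with hXdef
  have hWX : W ≤ X := le_sup_left
  have hNX : N ≤ X := le_sup_right
  set M' : Submodule ℤ ↥L := (Submodule.restrictScalars ℤ X).comap L.subtype with hM'def
  haveI : Module.Finite ℤ ↥L := Module.Finite.iff_fg.mpr hfg
  haveI : NoZeroSMulDivisors ℤ (↥L ⧸ M') := by
    constructor
    intro n x h
    by_cases hn : n = 0
    · exact Or.inl hn
    · right
      obtain ⟨v, rfl⟩ := Submodule.Quotient.mk_surjective M' x
      rw [← Submodule.Quotient.mk_smul, Submodule.Quotient.mk_eq_zero] at h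
      rw [Submodule.Quotient.mk_eq_zero]
      have hv : ((n • v : ↥L) : V) ∈ X := h
      have hv2 : (n : ℚ) • (v : V) ∈ X := by
        rwa [Int.cast_smul_eq_zsmul, ← Submodule.coe_smul] 
      have hv3 : ((n : ℚ))⁻¹ • ((n : ℚ) • (v : V)) ∈ X := Submodule.smul_mem _ _ hv2
      rw [inv_smul_smul₀ (by exact_mod_cast hn)] at hv3
      exact hv3
  haveI : Module.Free ℤ (↥L ⧸ M') := Module.free_of_finite_type_torsion_free'
  set ι := Module.Free.ChooseBasisIndex ℤ (↥L ⧸ M') with hιdef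
  set b : Module.Basis ι ℤ (↥L ⧸ M') := Module.Free.chooseBasis ℤ (↥L ⧸ M') with hbdef
  have hrep : ∀ j : ι, ∃ u : ↥L, M'.mkQ u = b j := by
    intro j
    obtain ⟨u, hu⟩ := Submodule.Quotient.mk_surjective M' (b j)
    exact ⟨u, hu⟩
  choose dL hdL using hrep
  set d : ι → V := fun j => (dL j : V) with hddef
  have hdLmem : ∀ j, d j ∈ L := fun j => (dL j).2
  -- denominators clearing
  have hstar : ∀ q : ι → ℚ, (∑ j, q j • d j) ∈ X → ∀ j, q j = 0 := by
    intro q hq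
    set n : ℤ := ∏ j, ((q j).den : ℤ) with hndef
    have hnne : (n : ℚ) ≠ 0 := by
      have : n ≠ 0 := by
        rw [hndef]
        exact Finset.prod_ne_zero_iff.mpr fun j _ => by exact_mod_cast (q j).den_nz
      exact_mod_cast this
    have hm : ∀ j, ∃ m : ℤ, (n : ℚ) * q j = m := by
      intro j
      obtain ⟨t, ht⟩ := Finset.dvd_prod_of_mem (fun i => ((q i).den : ℤ)) (Finset.mem_univ j)
      refine ⟨(q j).num * t, ?_⟩
      rw [hndef] 
      calc ((∏ i, ((q i).den : ℤ) : ℤ) : ℚ) * q j = (((q j).den : ℤ) * t : ℤ) * q j := by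
            rw [← ht]
        _ = (t : ℚ) * (q j * ((q j).den : ℚ)) := by push_cast; ring
        _ = (t : ℚ) * ((q j).num : ℚ) := by rw [Rat.mul_den_eq_num]
        _ = (((q j).num * t : ℤ) : ℚ) := by push_cast; ring
    choose m hmeq using hm
    have hsum : (∑ j, m j • dL j : ↥L) ∈ M' := by
      show ((∑ j, m j • dL j : ↥L) : V) ∈ X
      have hcoe : ((∑ j, m j • dL j : ↥L) : V) = ∑ j, (m j : ℚ) • d j := by
        rw [Submodule.coe_sum]
        refine Finset.sum_congr rfl fun j _ => ?_
        rw [Submodule.coe_smul, Int.cast_smul_eq_zsmul]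
      rw [hcoe]
      have h2 : ∑ j, (m j : ℚ) • d j = (n : ℚ) • ∑ j, q j • d j := by
        rw [Finset.smul_sum]
        refine Finset.sum_congr rfl fun j _ => ?_
        rw [smul_smul, ← hmeq j]
      rw [h2]
      exact Submodule.smul_mem _ _ hq
    have hq0 : M'.mkQ (∑ j, m j • dL j) = 0 := by
      rw [Submodule.mkQ_apply, Submodule.Quotient.mk_eq_zero]
      exact hsum
    have h2 : ∑ j, m j • b j = 0 := by
      calc ∑ j, m j • b j = ∑ j, m j • (M'.mkQ (dL j)) := by
            refine Finset.sum_congr rfl fun j _ => ?_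
            rw [hdL j]
        _ = M'.mkQ (∑ j, m j • dL j) := by rw [map_sum]; simp [map_zsmul]
        _ = 0 := hq0
    have hm0 : ∀ j, m j = 0 := Fintype.linearIndependent_iff.mp b.linearIndependent m h2
    intro j
    have h3 := hmeq j
    rw [hm0 j] at h3
    push_cast at h3
    rcases mul_eq_zero.mp h3 with h | h
    · exact absurd h hnne
    · exact h
  have hli : LinearIndependent ℚ d := by
    rw [Fintype.linearIndependent_iff]
    intro q hq j
    exact hstar q (by rw [hq]; exact Submodule.zero_mem X) j
  set C : Submodule ℚ V := Submodule.span ℚ (Set.range d) with hCdef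
  have hdC : ∀ j, d j ∈ C := fun j => Submodule.subset_span ⟨j, rfl⟩
  have hsplit : ∀ v ∈ L, ∃ m, m ∈ L ∧ m ∈ X ∧ ∃ z : ι → ℤ, v = m + ∑ j, z j • d j := by
    intro v hv
    set vq : ↥L := ⟨v, hv⟩ with hvqdef
    set z : ι → ℤ := fun j => b.repr (M'.mkQ vq) j with hzdef
    set r : ↥L := ∑ j, z j • dL j with hrdef
    have hrc : ((r : ↥L) : V) = ∑ j, z j • d j := by
      rw [hrdef, Submodule.coe_sum]
      exact Finset.sum_congr rfl fun j _ => by rw [Submodule.coe_smul]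
    have hmk : M'.mkQ (vq - r) = 0 := by
      rw [map_sub]
      have : M'.mkQ r = M'.mkQ vq := by
        rw [hrdef, map_sum]
        calc ∑ j, M'.mkQ (z j • dL j) = ∑ j, z j • b j := by
              refine Finset.sum_congr rfl fun j _ => ?_
              rw [map_zsmul, hdL j]
          _ = M'.mkQ vq := by rw [hzdef]; exact b.sum_repr (M'.mkQ vq)
      rw [this, sub_self]
    have hm' : vq - r ∈ M' := by
      rwa [Submodule.mkQ_apply, Submodule.Quotient.mk_eq_zero] at hmk
    refine ⟨v - (r : V), Submodule.sub_mem _ hv r.2, hm', z, by rw [← hrc]; abel⟩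
  have hXC : IsCompl X C := by
    constructor
    · rw [Submodule.disjoint_def]
      intro x hxX hxC
      obtain ⟨q, hq⟩ := (Submodule.mem_span_range_iff_exists_fun ℚ).mp hxC
      have h0 : ∀ j, q j = 0 := hstar q (by rw [hq]; exact hxX)
      rw [← hq]
      simp [h0]
    · rw [codisjoint_iff, eq_top_iff, ← hfull, Submodule.span_le]
      intro v hv
      obtain ⟨mm, hmL, hmX, z, hz⟩ := hsplit v hv
      rw [hz]
      exact Submodule.add_mem _ (Submodule.mem_sup_left hmX)
        (Submodule.mem_sup_right (Submodule.sum_mem _ fun j _ => hzsm C (z j) (d j) (hdC j)))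

  obtain ⟨q', hq'⟩ := Submodule.exists_isCompl ((W ⊓ N).comap N.subtype)
  set N₀ : Submodule ℚ V := q'.map N.subtype with hN0def
  have hN₀N : N₀ ≤ N := Submodule.map_subtype_le N q'
  have hWN₀ : ∀ x, x ∈ W → x ∈ N₀ → x = 0 := by
    intro x hxW hxN₀
    obtain ⟨u, hu, rfl⟩ := hxN₀
    have hu' : u ∈ (W ⊓ N).comap N.subtype := by
      rw [Submodule.mem_comap]
      exact ⟨hxW, u.2⟩
    have h0 := Submodule.disjoint_def.mp hq'.disjoint u hu' hu
    rw [h0]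
    rfl
  have hWN₀sup : W ⊔ N₀ = X := by
    apply le_antisymm
    · exact sup_le hWX (le_trans hN₀N hNX)
    · rw [hXdef]
      refine sup_le le_sup_left ?_
      intro n hn
      have htop : (⟨n, hn⟩ : ↥N) ∈ (W ⊓ N).comap N.subtype ⊔ q' := by
        rw [codisjoint_iff.mp hq'.codisjoint]; trivial
      obtain ⟨u, hu, w, hw, huw⟩ := Submodule.mem_sup.mp htop
      have hn2 : n = (u : V) + (w : V) := by
        have := congrArg (fun z : ↥N => (z : V)) huw
        exact this.symm
      rw [hn2]
      exact Submodule.add_mem _ (Submodule.mem_sup_left (Submodule.mem_comap.mp hu).1)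
        (Submodule.mem_sup_right ⟨w, hw, rfl⟩)
  have hCX0 : ∀ x, x ∈ X → x ∈ C → x = 0 := fun x h1 h2 =>
    Submodule.disjoint_def.mp hXC.disjoint x h1 h2
  have hWc : IsCompl W (N₀ ⊔ C) := by
    constructor
    · rw [Submodule.disjoint_def]
      intro x hxW hx
      obtain ⟨nn, hnn, c, hc, hxe⟩ := Submodule.mem_sup.mp hx
      have hcX : c ∈ X := by
        have h3 : c = x - nn := by rw [← hxe]; abel
        rw [h3]
        exact Submodule.sub_mem _ (hWX hxW) (hNX (hN₀N hnn))
      have hc0 : c = 0 := hCX0 c hcX hc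
      rw [hc0, add_zero] at hxe
      exact hWN₀ x hxW (hxe ▸ hnn)
    · rw [codisjoint_iff, ← sup_assoc, hWN₀sup]
      exact codisjoint_iff.mp hXC.codisjoint
  have hNc : IsCompl N₀ (W ⊔ C) := by
    constructor
    · rw [Submodule.disjoint_def]
      intro x hxN₀ hx
      obtain ⟨w, hw, c, hc, hxe⟩ := Submodule.mem_sup.mp hx
      have hcX : c ∈ X := by
        have h3 : c = x - w := by rw [← hxe]; abel
        rw [h3]
        exact Submodule.sub_mem _ (hNX (hN₀N hxN₀)) (hWX hw)
      have hc0 : c = 0 := hCX0 c hcX hc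
      rw [hc0, add_zero] at hxe
      exact hWN₀ x (hxe ▸ hw) hxN₀
    · rw [codisjoint_iff, ← sup_assoc, sup_comm N₀ W, hWN₀sup]
      exact codisjoint_iff.mp hXC.codisjoint
  -- projections
  set prW : V →ₗ[ℚ] ↥W := W.projectionOnto _ hWc with hprWdef
  set prN : V →ₗ[ℚ] ↥N₀ := N₀.projectionOnto _ hNc with hprNdef
  set prC : V →ₗ[ℚ] ↥C := C.projectionOnto _ hXC.symm with hprCdef
  set PW : V →ₗ[ℚ] V := W.subtype ∘ₗ prW with hPWdef
  set PN : V →ₗ[ℚ] V := N₀.subtype ∘ₗ prN with hPNdef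
  set PC : V →ₗ[ℚ] V := C.subtype ∘ₗ prC with hPCdef
  have hPWmem : ∀ v, PW v ∈ W := fun v => (prW v).2
  have hPNmem : ∀ v, PN v ∈ N₀ := fun v => (prN v).2
  have hPCmem : ∀ v, PC v ∈ C := fun v => (prC v).2
  have hPW_W : ∀ w ∈ W, PW w = w := by
    intro w hw
    show (W.subtype (prW w) : V) = w
    rw [hprWdef, show w = ((⟨w, hw⟩ : ↥W) : V) from rfl,
      Submodule.linearProjOfIsCompl_apply_left hWc ⟨w, hw⟩]
    rfl
  have hPW_R : ∀ x ∈ N₀ ⊔ C, PW x = 0 := by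
    intro x hx
    show (W.subtype (prW x) : V) = 0
    rw [hprWdef, Submodule.linearProjOfIsCompl_apply_right' hWc hx]
    rfl
  have hPN_N : ∀ n ∈ N₀, PN n = n := by
    intro n hn
    show (N₀.subtype (prN n) : V) = n
    rw [hprNdef, show n = ((⟨n, hn⟩ : ↥N₀) : V) from rfl,
      Submodule.linearProjOfIsCompl_apply_left hNc ⟨n, hn⟩]
    rfl
  have hPN_R : ∀ x ∈ W ⊔ C, PN x = 0 := by
    intro x hx
    show (N₀.subtype (prN x) : V) = 0
    rw [hprNdef, Submodule.linearProjOfIsCompl_apply_right' hNc hx]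
    rfl
  have hprC_C : ∀ (c : ↥C), prC (c : V) = c := by
    intro c
    rw [hprCdef, Submodule.linearProjOfIsCompl_apply_left hXC.symm c]
  have hprC_X : ∀ x ∈ X, prC x = 0 := by
    intro x hx
    rw [hprCdef, Submodule.linearProjOfIsCompl_apply_right' hXC.symm hx]
  have hPC_C : ∀ c ∈ C, PC c = c := by
    intro c hc
    show (C.subtype (prC c) : V) = c
    rw [show c = ((⟨c, hc⟩ : ↥C) : V) from rfl, hprC_C ⟨c, hc⟩]
    rfl
  have hPC_X : ∀ x ∈ X, PC x = 0 := by
    intro x hx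
    show (C.subtype (prC x) : V) = 0
    rw [hprC_X x hx]
    rfl
  have hsum3 : ∀ v, PW v + PN v + PC v = v := by
    have hT : ∀ v ∈ (W ⊔ (N₀ ⊔ C) : Submodule ℚ V), PW v + PN v + PC v = v := by
      intro v hv
      obtain ⟨w, hw, yy, hy, rfl⟩ := Submodule.mem_sup.mp hv
      obtain ⟨n, hn, c, hc, rfl⟩ := Submodule.mem_sup.mp hy
      simp only [map_add]
      rw [hPW_W w hw, hPW_R n (Submodule.mem_sup_left hn), hPW_R c (Submodule.mem_sup_right hc),
        hPN_R w (Submodule.mem_sup_left hw), hPN_N n hn, hPN_R c (Submodule.mem_sup_right hc),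
        hPC_X w (hWX hw), hPC_X n (hNX (hN₀N hn)), hPC_C c hc]
      abel
    intro v
    exact hT v (by rw [codisjoint_iff.mp hWc.codisjoint]; trivial)
  have hPWPN : ∀ m ∈ X, PW m + PN m = m := by
    intro m hm
    have h1 := hsum3 m
    rw [hPC_X m hm, add_zero] at h1
    exact h1

  -- PW of lattice points in X lies in the dual lattice of S
  have hPWN : ∀ n ∈ N, PW n ∈ W ⊓ N := by
    intro n hn
    refine Submodule.mem_inf.mpr ⟨hPWmem n, ?_⟩
    have h1 : PW n = n - PN n := by
      rw [eq_sub_iff_add_eq]; exact hPWPN n (hNX hn)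
    rw [h1]
    exact Submodule.sub_mem _ hn (hN₀N (hPNmem n))
  have hPWdual : ∀ m, m ∈ L → m ∈ X → PW m ∈ dualLat B S := by
    intro m hmL hmX
    refine (hdmem _).2 ⟨hPWmem m, fun s hs => ?_⟩
    obtain ⟨n, hn⟩ := hint m hmL s (hSL hs)
    refine ⟨n, ?_⟩
    have h3 : PW m = m - PN m := by
      rw [eq_sub_iff_add_eq]; exact hPWPN m hmX
    rw [h3, map_sub, LinearMap.sub_apply, hn]
    have h5 : B (PN m) s = 0 := by
      rw [hsymm]
      exact (hNiff (PN m)).1 (hN₀N (hPNmem m)) s (hSsubW s hs)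
    rw [h5, sub_zero]
  -- the duality equivalence
  set TD : V ≃ₗ[ℚ] Module.Dual ℚ V := LinearMap.BilinForm.toDual B hnd with hTDdef
  have hTD : ∀ (f : Module.Dual ℚ V) (v : V), B (TD.symm f) v = f v := by
    intro f v
    rw [hTDdef]
    exact LinearMap.BilinForm.apply_toDual_symm_apply f v
  set Dpsi : V →ₗ[ℚ] V := ψ.symm.toLinearMap - (ε : ℚ) • LinearMap.id with hDpsidef
  have hDpsiApply : ∀ v, Dpsi v = ψ.symm v - (ε : ℚ) • v := fun v => rfl
  have hDpsiS : ∀ x ∈ dualLat B S, Dpsi x ∈ S := fun x hx => by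
    rw [hDpsiApply]; exact hdisc' x hx
  set y : ι → V := fun j => TD.symm ((B (d j)) ∘ₗ (Dpsi ∘ₗ PW)) with hydef
  have hyB : ∀ j v, B (y j) v = B (d j) (Dpsi (PW v)) := by
    intro j v
    rw [hydef]
    exact hTD ((B (d j)) ∘ₗ (Dpsi ∘ₗ PW)) v
  have hyL : ∀ j, y j ∈ L := by
    intro j
    apply hunimodular
    refine ⟨by rw [hfull]; trivial, ?_⟩
    intro v hv
    obtain ⟨m, hmL, hmX, z, rfl⟩ := hsplit v hv
    obtain ⟨n, hn⟩ := hint (d j) (hdLmem j) (Dpsi (PW m)) (hSL (hDpsiS _ (hPWdual m hmL hmX)))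
    refine ⟨n, ?_⟩
    have hPWc : PW (∑ i, z i • d i) = 0 :=
      hPW_R _ (Submodule.mem_sup_right (Submodule.sum_mem _ fun i _ => hzsm C (z i) (d i) (hdC i)))
    have h7 : B (y j) (∑ i, z i • d i) = 0 := by
      rw [hyB, hPWc, map_zero, map_zero]
    rw [map_add, h7, add_zero, hyB, hn]
  have hyN : ∀ j, ∀ n ∈ N, B (y j) n = 0 := by
    intro j n hn
    rw [hyB]
    have h1 := hPWN n hn
    have h2 : Dpsi (PW n) = 0 := by
      rw [hDpsiApply, factB' _ (Submodule.mem_inf.mp h1).1 (Submodule.mem_inf.mp h1).2, sub_self]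
    rw [h2, map_zero]
  have hyW : ∀ j, y j ∈ W := by
    intro j
    rw [hWiff]
    intro n hn
    rw [hsymm]
    exact hyN j n hn
  have hyS : ∀ j, y j ∈ S := fun j => hPrim _ (hyL j) (hyW j)
  have hyprop : ∀ j, ∀ u ∈ W, B (y j) u = B (d j) (ψ.symm u) - (ε : ℚ) * B (d j) u := by
    intro j u hu
    rw [hyB, hPW_W u hu, hDpsiApply, map_sub, map_smul, smul_eq_mul]
  -- integer matrices
  choose t1 ht1 using fun i j => hint (d i) (hdLmem i) (y j) (hSL (hyS j))
  choose t2 ht2 using fun i j => hint (y i) (hSL (hyS i)) (y j) (hSL (hyS j))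
  choose kk hkk using fun i => heven (y i) (hSL (hyS i))
  set eo : ι ≃ Fin (Fintype.card ι) := Fintype.equivFin ι with heodef
  set gZ : ι → ι → ℤ := fun i j => ε * (t1 i j + t1 j i) + t2 i j with hgZdef
  have ht2sym : ∀ i j, t2 i j = t2 j i := by
    intro i j
    have h1 := hsymm (y i) (y j)
    rw [ht2 i j, ht2 j i] at h1
    exact_mod_cast h1
  have hgZsym : ∀ i j, gZ i j = gZ j i := by
    intro i j
    simp only [hgZdef]
    rw [ht2sym i j]
    ring
  have ht2diag : ∀ i, t2 i i = 2 * kk i := by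
    intro i
    have h1 := hkk i
    rw [ht2 i i] at h1
    exact_mod_cast h1
  set aZ : ι → ι → ℤ := fun i j =>
    if eo i = eo j then (-(t1 i i) - ε * kk i)
    else if eo i < eo j then -(ε * gZ i j) else 0 with haZdef
  have haZ : ∀ i j, aZ i j + aZ j i = -(ε * gZ i j) := by
    intro i j
    by_cases hij : i = j
    · subst hij
      simp only [haZdef, if_pos rfl, hgZdef, ht2diag i]
      linear_combination (2 * t1 i i) * hεZ
    · have heoij : eo i ≠ eo j := fun h => hij (eo.injective h)
      rcases lt_or_gt_of_ne heoij with h | h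
      · simp only [haZdef, if_neg heoij, if_neg (Ne.symm heoij), if_pos h,
          if_neg (asymm h)]
        ring
      · simp only [haZdef, if_neg heoij, if_neg (Ne.symm heoij), if_pos h,
          if_neg (asymm h)]
        rw [hgZsym i j]
        ring
  -- the basis of C and the ρ vectors
  set bC : Module.Basis ι ℚ ↥C := Module.Basis.span hli with hbCdef
  have hbC : ∀ j, (bC j : V) = d j := by
    intro j
    rw [hbCdef]
    exact Module.Basis.coe_span_apply hli j
  set G : ι → Module.Dual ℚ V := fun j => ∑ i, (aZ i j : ℚ) • ((bC.coord i) ∘ₗ prC) with hGdef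
  set ρ : ι → V := fun j => TD.symm (G j) with hρdef
  have hρB : ∀ j v, B (ρ j) v = G j v := fun j v => hTD _ _
  have hGX : ∀ j, ∀ x ∈ X, G j x = 0 := by
    intro j x hx
    rw [hGdef]
    simp only [LinearMap.sum_apply, LinearMap.smul_apply, LinearMap.comp_apply]
    rw [hprC_X x hx]
    simp
  have hGd : ∀ j i, G j (d i) = (aZ i j : ℚ) := by
    intro j i
    rw [hGdef]
    simp only [LinearMap.sum_apply, LinearMap.smul_apply, LinearMap.comp_apply]
    have h1 : prC (d i) = bC i := by
      rw [show d i = ((⟨d i, hdC i⟩ : ↥C) : V) from rfl, hprC_C ⟨d i, hdC i⟩]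
      exact Subtype.ext (hbC i).symm
    rw [h1]
    have h2 : ∀ i', bC.coord i' (bC i) = if i = i' then 1 else 0 := by
      intro i'
      rw [Module.Basis.coord_apply, Module.Basis.repr_self, Finsupp.single_apply]
    calc ∑ i', (aZ i' j : ℚ) • bC.coord i' (bC i)
        = ∑ i', if i = i' then (aZ i' j : ℚ) else 0 := by
          refine Finset.sum_congr rfl fun i' _ => ?_
          rw [h2 i', smul_eq_mul, mul_ite, mul_one, mul_zero]
      _ = (aZ i j : ℚ) := by rw [Finset.sum_ite_eq]; simp
  have hρX : ∀ j, ∀ x ∈ X, B (ρ j) x = 0 := fun j x hx => by rw [hρB]; exact hGX j x hx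
  have hρW : ∀ j, ρ j ∈ W := by
    intro j
    rw [hWiff]
    intro n hn
    rw [hsymm]
    exact hρX j n (hNX hn)
  have hρN : ∀ j, ρ j ∈ N := by
    intro j
    rw [hNiff]
    intro w hw
    rw [hsymm]
    exact hρX j w (hWX hw)
  have hρd : ∀ j i, B (ρ j) (d i) = (aZ i j : ℚ) := fun j i => by rw [hρB]; exact hGd j i
  have hρL : ∀ j, ρ j ∈ L := by
    intro j
    apply hunimodular
    refine ⟨by rw [hfull]; trivial, ?_⟩
    intro v hv
    obtain ⟨m, hmL, hmX, z, rfl⟩ := hsplit v hv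
    refine ⟨∑ i, z i * aZ i j, ?_⟩
    rw [map_add, hρX j m hmX, zero_add, map_sum]
    push_cast
    refine Finset.sum_congr rfl fun i _ => ?_
    rw [map_zsmul, hρd j i]
    rw [← Int.cast_smul_eq_zsmul ℚ (z i), smul_eq_mul]
  have hρS : ∀ j, ρ j ∈ S := fun j => hPrim _ (hρL j) (hρW j)
  -- the correction vectors
  set Ee : ι → V := fun j => y j + ρ j with hEedef
  have hES : ∀ j, Ee j ∈ S := fun j => Submodule.add_mem _ (hyS j) (hρS j)
  have hEW : ∀ j, Ee j ∈ W := fun j => hSsubW _ (hES j)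
  have hEprop : ∀ j, ∀ u ∈ W, B (Ee j) u = B (d j) (ψ.symm u) - (ε : ℚ) * B (d j) u := by
    intro j u hu
    have h0 : Ee j = y j + ρ j := rfl
    rw [h0, map_add, LinearMap.add_apply, hρX j u (hWX hu), add_zero, hyprop j u hu]
  have hEN : ∀ j, ∀ n ∈ N, B (Ee j) n = 0 := by
    intro j n hn
    have h0 : Ee j = y j + ρ j := rfl
    rw [h0, map_add, LinearMap.add_apply, hyN j n hn, zero_add]
    exact (hNiff n).1 hn (ρ j) (hρW j)
  have hT : ∀ i j, (ε:ℚ) * B (d i) (Ee j) + (ε:ℚ) * B (Ee i) (d j) + B (Ee i) (Ee j) = 0 := by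
    intro i j
    have e1 : B (d i) (Ee j) = (t1 i j : ℚ) + (aZ i j : ℚ) := by
      have h0 : Ee j = y j + ρ j := rfl
      rw [h0, map_add, ht1 i j]
      rw [show B (d i) (ρ j) = (aZ i j : ℚ) from by rw [hsymm]; exact hρd j i]
    have e2 : B (Ee i) (d j) = (t1 j i : ℚ) + (aZ j i : ℚ) := by
      have h0 : Ee i = y i + ρ i := rfl
      rw [h0, map_add, LinearMap.add_apply]
      rw [show B (y i) (d j) = (t1 j i : ℚ) from by rw [hsymm]; exact ht1 j i]
      rw [hρd i j]
    have e3 : B (Ee i) (Ee j) = (t2 i j : ℚ) := by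
      have h0 : Ee i = y i + ρ i := rfl
      have h0' : Ee j = y j + ρ j := rfl
      rw [h0, h0']
      simp only [map_add, LinearMap.add_apply]
      rw [ht2 i j]
      rw [show B (y i) (ρ j) = 0 from (hNiff (ρ j)).1 (hρN j) (y i) (hyW i)]
      rw [show B (ρ i) (y j) = 0 from hρX i (y j) (hWX (hyW j))]
      rw [show B (ρ i) (ρ j) = 0 from hρX i (ρ j) (hWX (hρW j))]
      ring
    rw [e1, e2, e3]
    have h4 : ((aZ i j : ℚ) + (aZ j i : ℚ)) = -((ε:ℚ) * ((ε:ℚ) * ((t1 i j : ℚ) + (t1 j i : ℚ)) + (t2 i j : ℚ))) := by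
      have h5 := haZ i j
      rw [hgZdef] at h5
      exact_mod_cast congrArg (fun n : ℤ => (n : ℚ)) h5
    linear_combination (ε:ℚ) * h4 - ((ε:ℚ) * ((t1 i j : ℚ) + (t1 j i : ℚ)) + (t2 i j : ℚ)) * hεQ

  have hεQne : (ε : ℚ) ≠ 0 := by rcases hε with h | h <;> subst h <;> norm_num
  -- the correction linear map
  set EC : V →ₗ[ℚ] V := ((bC.constr ℚ Ee : ↥C →ₗ[ℚ] V)) ∘ₗ prC with hECdef
  have hECapply : ∀ v, EC v = bC.constr ℚ Ee (prC v) := fun v => rfl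
  have hECd : ∀ j, EC (d j) = Ee j := by
    intro j
    rw [hECapply]
    have h1 : prC (d j) = bC j := by
      rw [show d j = ((⟨d j, hdC j⟩ : ↥C) : V) from rfl, hprC_C ⟨d j, hdC j⟩]
      exact Subtype.ext (hbC j).symm
    rw [h1]
    exact bC.constr_basis ℚ Ee j
  have hECX : ∀ x ∈ X, EC x = 0 := by
    intro x hx
    rw [hECapply, hprC_X x hx, map_zero]
  have hECW : ∀ v, EC v ∈ W := by
    intro v
    rw [hECapply, Module.Basis.constr_apply_fintype]
    exact Submodule.sum_mem _ fun j _ => Submodule.smul_mem _ _ (hEW j)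
  -- the extension
  set F : V →ₗ[ℚ] V := ψ.toLinearMap ∘ₗ PW + (ε:ℚ) • PN + (ε:ℚ) • PC + EC with hFdef
  have hFapply : ∀ v, F v = ψ (PW v) + (ε:ℚ) • PN v + (ε:ℚ) • PC v + EC v := fun v => rfl
  have hFW : ∀ w ∈ W, F w = ψ w := by
    intro w hw
    rw [hFapply, hPW_W w hw, hPN_R w (Submodule.mem_sup_left hw), hPC_X w (hWX hw),
      hECX w (hWX hw)]
    simp
  have hFNfull : ∀ n ∈ N, F n = (ε:ℚ) • n := by
    intro n hn
    have h1 := Submodule.mem_inf.mp (hPWN n hn)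
    rw [hFapply, hPC_X n (hNX hn), hECX n (hNX hn), factB _ h1.1 h1.2]
    rw [smul_zero, add_zero, add_zero, ← smul_add, hPWPN n (hNX hn)]
  have hFd : ∀ j, F (d j) = (ε:ℚ) • d j + Ee j := by
    intro j
    rw [hFapply, hECd j, hPW_R _ (Submodule.mem_sup_right (hdC j)),
      hPN_R _ (Submodule.mem_sup_right (hdC j)), hPC_C _ (hdC j), map_zero, smul_zero]
    abel
  have hFC : ∀ c ∈ C, F c = (ε:ℚ) • c + EC c := by
    intro c hc
    rw [hFapply, hPW_R _ (Submodule.mem_sup_right hc), hPN_R _ (Submodule.mem_sup_right hc),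
      hPC_C _ hc, map_zero, smul_zero]
    abel
  have hFmX : ∀ m ∈ X, F m = ψ (PW m) + (ε:ℚ) • PN m := by
    intro m hm
    rw [hFapply, hPC_X m hm, hECX m hm, smul_zero, add_zero, add_zero]
  have hFM : ∀ m, m ∈ L → m ∈ X → F m = (ε:ℚ) • m + (ψ (PW m) - (ε:ℚ) • PW m) := by
    intro m hmL hmX
    rw [hFmX m hmX]
    have h1 : (ε:ℚ) • m = (ε:ℚ) • PW m + (ε:ℚ) • PN m := by rw [← smul_add, hPWPN m hmX]
    rw [h1]
    abel
  -- injectivity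
  have hFinj : Function.Injective F := by
    have h0 : ∀ x, F x = 0 → x = 0 := by
      intro x hx
      have hxtop : x ∈ (W ⊔ (N₀ ⊔ C) : Submodule ℚ V) := by
        rw [codisjoint_iff.mp hWc.codisjoint]; trivial
      obtain ⟨w, hw, yy, hy, rfl⟩ := Submodule.mem_sup.mp hxtop
      obtain ⟨n, hn, c, hc, rfl⟩ := Submodule.mem_sup.mp hy
      have hFx : (ψ w + EC c) + ((ε:ℚ) • n + (ε:ℚ) • c) = 0 := by
        rw [← hx, map_add, map_add, hFW w hw, hFNfull n (hN₀N hn), hFC c hc]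
        abel
      have hprC_Cm : ∀ cc (hcc : cc ∈ C), prC cc = ⟨cc, hcc⟩ := fun cc hcc =>
        hprC_C ⟨cc, hcc⟩
      have hprN_R : ∀ xx ∈ W ⊔ C, prN xx = 0 := fun xx hxx =>
        Submodule.linearProjOfIsCompl_apply_right' hNc hxx
      have hprN_Nm : ∀ nn (hnn : nn ∈ N₀), prN nn = ⟨nn, hnn⟩ := fun nn hnn =>
        Submodule.linearProjOfIsCompl_apply_left hNc ⟨nn, hnn⟩
      have hc0 : c = 0 := by
        have h1 := congrArg prC hFx
        rw [map_zero, map_add, map_add, map_add, map_smul, map_smul,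
          hprC_X _ (hWX (hψW w hw)), hprC_X _ (hWX (hECW c)),
          hprC_X _ (hNX (hN₀N hn)), hprC_Cm c hc] at h1
        simp only [smul_zero, zero_add] at h1
        have h2 := (smul_eq_zero.mp h1).resolve_left hεQne
        exact congrArg Subtype.val h2
      have hFx2 : ψ w + (ε:ℚ) • n = 0 := by
        rw [hc0] at hFx
        simpa using hFx
      have hn0 : n = 0 := by
        have h1 := congrArg prN hFx2
        rw [map_zero, map_add, map_smul,
          hprN_R (ψ w) (Submodule.mem_sup_left (hψW w hw)), hprN_Nm n hn] at h1
        simp only [zero_add] at h1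
        have h2 := (smul_eq_zero.mp h1).resolve_left hεQne
        exact congrArg Subtype.val h2
      have hw0 : w = 0 := by
        apply ψ.injective
        rw [map_zero]
        rw [hn0, smul_zero, add_zero] at hFx2
        exact hFx2
      rw [hw0, hn0, hc0]
      simp
    intro u v huv
    have h1 := h0 (u - v) (by rw [map_sub, huv, sub_self])
    exact sub_eq_zero.mp h1
  have hFbij : Function.Bijective F := ⟨hFinj, (LinearMap.injective_iff_surjective).mp hFinj⟩
  set Φ : V ≃ₗ[ℚ] V := LinearEquiv.ofBijective F hFbij with hΦdef
  have hΦap : ∀ v, Φ v = F v := fun v => rfl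
  -- isometry
  have hGspan : Submodule.span ℚ ((W : Set V) ∪ ((N₀ : Set V) ∪ Set.range d)) = ⊤ := by
    rw [Submodule.span_union, Submodule.span_union, Submodule.span_eq, Submodule.span_eq, ← hCdef]
    rw [codisjoint_iff.mp hWc.codisjoint]
  have key : B.compl₁₂ F F = B := by
    apply LinearMap.ext_on hGspan
    intro x hx
    apply LinearMap.ext_on hGspan
    intro z hz
    simp only [LinearMap.compl₁₂_apply]
    rcases hx with hx | hx | ⟨jx, rfl⟩
    · rcases hz with hz | hz | ⟨jz, rfl⟩
      · rw [hFW x hx, hFW z hz]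
        exact hψBW x hx z hz
      · have hz' := (hNiff z).1 (hN₀N hz)
        rw [hFW x hx, hFNfull z (hN₀N hz), map_smul, smul_eq_mul,
          hz' (ψ x) (hψW x hx), hz' x hx, mul_zero]
      · have h1 : B (ψ x) (Ee jz) = B (d jz) x - (ε:ℚ) * B (d jz) (ψ x) := by
          rw [hsymm, hEprop jz (ψ x) (hψW x hx), ψ.symm_apply_apply]
        rw [hFW x hx, hFd jz, map_add, map_smul, smul_eq_mul, h1,
          hsymm (ψ x) (d jz), hsymm x (d jz)]
        ring
    · rcases hz with hz | hz | ⟨jz, rfl⟩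
      · have hx' := (hNiff x).1 (hN₀N hx)
        rw [hFNfull x (hN₀N hx), hFW z hz]
        rw [map_smul, LinearMap.smul_apply, smul_eq_mul]
        rw [hsymm x (ψ z), hx' (ψ z) (hψW z hz), mul_zero, hsymm x z, hx' z hz]
      · rw [hFNfull x (hN₀N hx), hFNfull z (hN₀N hz)]
        simp only [map_smul, LinearMap.smul_apply, smul_eq_mul]
        linear_combination (B x z) * hεQ
      · rw [hFNfull x (hN₀N hx), hFd jz]
        simp only [map_add, map_smul, LinearMap.smul_apply, smul_eq_mul]
        have h1 : B x (Ee jz) = 0 := by rw [hsymm]; exact hEN jz x (hN₀N hx)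
        rw [h1]
        linear_combination (B x (d jz)) * hεQ
    · rcases hz with hz | hz | ⟨jz, rfl⟩
      · have h1 : B (Ee jx) (ψ z) = B (d jx) z - (ε:ℚ) * B (d jx) (ψ z) := by
          rw [hEprop jx (ψ z) (hψW z hz), ψ.symm_apply_apply]
        rw [hFd jx, hFW z hz]
        simp only [map_add, map_smul, LinearMap.add_apply, LinearMap.smul_apply, smul_eq_mul]
        rw [h1]
        ring
      · rw [hFd jx, hFNfull z (hN₀N hz)]
        simp only [map_add, map_smul, LinearMap.add_apply, LinearMap.smul_apply, smul_eq_mul]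
        rw [hEN jx z (hN₀N hz)]
        linear_combination (B (d jx) z) * hεQ
      · rw [hFd jx, hFd jz]
        simp only [map_add, map_smul, LinearMap.add_apply, LinearMap.smul_apply, smul_eq_mul]
        linear_combination hT jx jz + (B (d jx) (d jz)) * hεQ
  have hiso : ∀ v w, B (F v) (F w) = B v w := by
    intro v w
    calc B (F v) (F w) = B.compl₁₂ F F v w := by rw [LinearMap.compl₁₂_apply]
      _ = B v w := by rw [key]
  -- K is inside N
  have hKN : ∀ x ∈ orthoIn B L S, x ∈ N := by
    intro x hx
    rw [hNiff]
    intro w hw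
    induction hw using Submodule.span_induction with
    | mem s hs => rw [hsymm]; exact hx.2 s hs
    | zero => simp
    | add a b _ _ ha hb => rw [map_add, LinearMap.add_apply, ha, hb, add_zero]
    | smul q a _ ha => rw [map_smul, LinearMap.smul_apply, smul_eq_mul, ha, mul_zero]
  refine ⟨Φ, hiso, ?_, fun s hs => hFW s (hSsubW s hs), fun x hx => hFNfull x (hKN x hx)⟩
  apply le_antisymm
  · rintro xx ⟨v, hv, rfl⟩
    show F v ∈ L
    obtain ⟨m, hmL, hmX, z, rfl⟩ := hsplit v hv
    rw [map_add, hFM m hmL hmX, map_sum]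
    refine Submodule.add_mem _ (Submodule.add_mem _ ?_ (hSL (hdisc _ (hPWdual m hmL hmX)))) ?_
    · rw [Int.cast_smul_eq_zsmul]; exact Submodule.smul_mem L ε hmL
    · refine Submodule.sum_mem _ fun j _ => ?_
      rw [map_zsmul, hFd j]
      refine Submodule.smul_mem L (z j) (Submodule.add_mem _ ?_ (hSL (hES j)))
      rw [Int.cast_smul_eq_zsmul]; exact Submodule.smul_mem L ε (hdLmem j)
  · intro v hv
    obtain ⟨m, hmL, hmX, z, rfl⟩ := hsplit v hv
    have hs'S : ψ.symm (PW m) - (ε:ℚ) • PW m ∈ S := hdisc' _ (hPWdual m hmL hmX)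
    have hu1 : F ((ε:ℚ) • m + (ψ.symm (PW m) - (ε:ℚ) • PW m)) = m := by
      rw [map_add, map_smul, hFmX m hmX, hFW _ (hSsubW _ hs'S), map_sub, map_smul,
        ψ.apply_symm_apply, smul_add, smul_smul, hεQ, one_smul]
      conv_rhs => rw [← hPWPN m hmX]
      abel
    have hu2 : ∀ j, F ((ε:ℚ) • d j - (ε:ℚ) • ψ.symm (Ee j)) = d j := by
      intro j
      rw [map_sub, map_smul, map_smul, hFd j, hFW _ (hSsubW _ (hψiS _ (hES j))),
        ψ.apply_symm_apply, smul_add, smul_smul, hεQ, one_smul]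
      abel
    refine Submodule.mem_map.mpr
      ⟨(ε:ℚ) • m + (ψ.symm (PW m) - (ε:ℚ) • PW m)
        + ∑ j, z j • ((ε:ℚ) • d j - (ε:ℚ) • ψ.symm (Ee j)), ?_, ?_⟩
    · refine Submodule.add_mem _ (Submodule.add_mem _ ?_ (hSL hs'S))
        (Submodule.sum_mem _ fun j _ => Submodule.smul_mem L (z j) (Submodule.sub_mem _ ?_ ?_))
      · rw [Int.cast_smul_eq_zsmul]; exact Submodule.smul_mem L ε hmL
      · rw [Int.cast_smul_eq_zsmul]; exact Submodule.smul_mem L ε (hdLmem j)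
      · rw [Int.cast_smul_eq_zsmul]; exact Submodule.smul_mem L ε (hSL (hψiS _ (hES j)))
    · show F _ = m + ∑ j, z j • d j
      rw [map_add, hu1, map_sum]
      congr 1
      refine Finset.sum_congr rfl fun j _ => ?_
      rw [map_zsmul, hu2 j]
end

section
/- Let Λ̃ be an even unimodular lattice of signature (4,4) (hence isometric to U^{⊕4}), let w ∈ Λ̃ be primitive with w² = 2k > 0, let m ≥ 1, and set v = mw. Then the orthogonal complement v^⊥ of v in Λ̃ is an even lattice of rank 7 and signature (3,4), isometric to U^{⊕3} ⊕ ⟨-2k⟩. -/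
/-- The Gram matrix of `U^{⊕4}`, `U` the hyperbolic plane. -/
def gramU4 : Matrix (Fin 8) (Fin 8) ℚ :=
  !![0,1,0,0,0,0,0,0; 1,0,0,0,0,0,0,0;
     0,0,0,1,0,0,0,0; 0,0,1,0,0,0,0,0;
     0,0,0,0,0,1,0,0; 0,0,0,0,1,0,0,0;
     0,0,0,0,0,0,0,1; 0,0,0,0,0,0,1,0]

/-- The Gram matrix of `U^{⊕3} ⊕ ⟨-2k⟩`. -/
def gramU3neg2k (k : ℤ) : Matrix (Fin 7) (Fin 7) ℚ :=
  !![0,1,0,0,0,0,0; 1,0,0,0,0,0,0;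
     0,0,0,1,0,0,0; 0,0,1,0,0,0,0;
     0,0,0,0,0,1,0; 0,0,0,0,1,0,0;
     0,0,0,0,0,0,-(2*(k:ℚ))]

namespace Stmt10Aux

section vecLemmas
variable {α : Type*} (a0 a1 a2 a3 a4 a5 a6 a7 : α)
@[simp] lemma v8_0 : ![a0,a1,a2,a3,a4,a5,a6,a7] (0 : Fin 8) = a0 := rfl
@[simp] lemma v8_1 : ![a0,a1,a2,a3,a4,a5,a6,a7] (1 : Fin 8) = a1 := rfl
@[simp] lemma v8_2 : ![a0,a1,a2,a3,a4,a5,a6,a7] (2 : Fin 8) = a2 := rfl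
@[simp] lemma v8_3 : ![a0,a1,a2,a3,a4,a5,a6,a7] (3 : Fin 8) = a3 := rfl
@[simp] lemma v8_4 : ![a0,a1,a2,a3,a4,a5,a6,a7] (4 : Fin 8) = a4 := rfl
@[simp] lemma v8_5 : ![a0,a1,a2,a3,a4,a5,a6,a7] (5 : Fin 8) = a5 := rfl
@[simp] lemma v8_6 : ![a0,a1,a2,a3,a4,a5,a6,a7] (6 : Fin 8) = a6 := rfl
@[simp] lemma v8_7 : ![a0,a1,a2,a3,a4,a5,a6,a7] (7 : Fin 8) = a7 := rfl
@[simp] lemma v7_0 : ![a0,a1,a2,a3,a4,a5,a6] (0 : Fin 7) = a0 := rfl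
@[simp] lemma v7_1 : ![a0,a1,a2,a3,a4,a5,a6] (1 : Fin 7) = a1 := rfl
@[simp] lemma v7_2 : ![a0,a1,a2,a3,a4,a5,a6] (2 : Fin 7) = a2 := rfl
@[simp] lemma v7_3 : ![a0,a1,a2,a3,a4,a5,a6] (3 : Fin 7) = a3 := rfl
@[simp] lemma v7_4 : ![a0,a1,a2,a3,a4,a5,a6] (4 : Fin 7) = a4 := rfl
@[simp] lemma v7_5 : ![a0,a1,a2,a3,a4,a5,a6] (5 : Fin 7) = a5 := rfl
@[simp] lemma v7_6 : ![a0,a1,a2,a3,a4,a5,a6] (6 : Fin 7) = a6 := rfl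
@[simp] lemma v8m_0 : ![a0,a1,a2,a3,a4,a5,a6,a7] (⟨0, by omega⟩ : Fin 8) = a0 := rfl
@[simp] lemma v8m_1 : ![a0,a1,a2,a3,a4,a5,a6,a7] (⟨1, by omega⟩ : Fin 8) = a1 := rfl
@[simp] lemma v8m_2 : ![a0,a1,a2,a3,a4,a5,a6,a7] (⟨2, by omega⟩ : Fin 8) = a2 := rfl
@[simp] lemma v8m_3 : ![a0,a1,a2,a3,a4,a5,a6,a7] (⟨3, by omega⟩ : Fin 8) = a3 := rfl
@[simp] lemma v8m_4 : ![a0,a1,a2,a3,a4,a5,a6,a7] (⟨4, by omega⟩ : Fin 8) = a4 := rfl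
@[simp] lemma v8m_5 : ![a0,a1,a2,a3,a4,a5,a6,a7] (⟨5, by omega⟩ : Fin 8) = a5 := rfl
@[simp] lemma v8m_6 : ![a0,a1,a2,a3,a4,a5,a6,a7] (⟨6, by omega⟩ : Fin 8) = a6 := rfl
@[simp] lemma v8m_7 : ![a0,a1,a2,a3,a4,a5,a6,a7] (⟨7, by omega⟩ : Fin 8) = a7 := rfl
@[simp] lemma v7m_0 : ![a0,a1,a2,a3,a4,a5,a6] (⟨0, by omega⟩ : Fin 7) = a0 := rfl
@[simp] lemma v7m_1 : ![a0,a1,a2,a3,a4,a5,a6] (⟨1, by omega⟩ : Fin 7) = a1 := rfl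
@[simp] lemma v7m_2 : ![a0,a1,a2,a3,a4,a5,a6] (⟨2, by omega⟩ : Fin 7) = a2 := rfl
@[simp] lemma v7m_3 : ![a0,a1,a2,a3,a4,a5,a6] (⟨3, by omega⟩ : Fin 7) = a3 := rfl
@[simp] lemma v7m_4 : ![a0,a1,a2,a3,a4,a5,a6] (⟨4, by omega⟩ : Fin 7) = a4 := rfl
@[simp] lemma v7m_5 : ![a0,a1,a2,a3,a4,a5,a6] (⟨5, by omega⟩ : Fin 7) = a5 := rfl
@[simp] lemma v7m_6 : ![a0,a1,a2,a3,a4,a5,a6] (⟨6, by omega⟩ : Fin 7) = a6 := rfl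
end vecLemmas

section gramEntries
@[simp] lemma gU4_0_0 : gramU4 0 0 = 0 := rfl
@[simp] lemma gU4_0_1 : gramU4 0 1 = 1 := rfl
@[simp] lemma gU4_0_2 : gramU4 0 2 = 0 := rfl
@[simp] lemma gU4_0_3 : gramU4 0 3 = 0 := rfl
@[simp] lemma gU4_0_4 : gramU4 0 4 = 0 := rfl
@[simp] lemma gU4_0_5 : gramU4 0 5 = 0 := rfl
@[simp] lemma gU4_0_6 : gramU4 0 6 = 0 := rfl
@[simp] lemma gU4_0_7 : gramU4 0 7 = 0 := rfl
@[simp] lemma gU4_1_0 : gramU4 1 0 = 1 := rfl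
@[simp] lemma gU4_1_1 : gramU4 1 1 = 0 := rfl
@[simp] lemma gU4_1_2 : gramU4 1 2 = 0 := rfl
@[simp] lemma gU4_1_3 : gramU4 1 3 = 0 := rfl
@[simp] lemma gU4_1_4 : gramU4 1 4 = 0 := rfl
@[simp] lemma gU4_1_5 : gramU4 1 5 = 0 := rfl
@[simp] lemma gU4_1_6 : gramU4 1 6 = 0 := rfl
@[simp] lemma gU4_1_7 : gramU4 1 7 = 0 := rfl
@[simp] lemma gU4_2_0 : gramU4 2 0 = 0 := rfl
@[simp] lemma gU4_2_1 : gramU4 2 1 = 0 := rfl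
@[simp] lemma gU4_2_2 : gramU4 2 2 = 0 := rfl
@[simp] lemma gU4_2_3 : gramU4 2 3 = 1 := rfl
@[simp] lemma gU4_2_4 : gramU4 2 4 = 0 := rfl
@[simp] lemma gU4_2_5 : gramU4 2 5 = 0 := rfl
@[simp] lemma gU4_2_6 : gramU4 2 6 = 0 := rfl
@[simp] lemma gU4_2_7 : gramU4 2 7 = 0 := rfl
@[simp] lemma gU4_3_0 : gramU4 3 0 = 0 := rfl
@[simp] lemma gU4_3_1 : gramU4 3 1 = 0 := rfl
@[simp] lemma gU4_3_2 : gramU4 3 2 = 1 := rfl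
@[simp] lemma gU4_3_3 : gramU4 3 3 = 0 := rfl
@[simp] lemma gU4_3_4 : gramU4 3 4 = 0 := rfl
@[simp] lemma gU4_3_5 : gramU4 3 5 = 0 := rfl
@[simp] lemma gU4_3_6 : gramU4 3 6 = 0 := rfl
@[simp] lemma gU4_3_7 : gramU4 3 7 = 0 := rfl
@[simp] lemma gU4_4_0 : gramU4 4 0 = 0 := rfl
@[simp] lemma gU4_4_1 : gramU4 4 1 = 0 := rfl
@[simp] lemma gU4_4_2 : gramU4 4 2 = 0 := rfl
@[simp] lemma gU4_4_3 : gramU4 4 3 = 0 := rfl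
@[simp] lemma gU4_4_4 : gramU4 4 4 = 0 := rfl
@[simp] lemma gU4_4_5 : gramU4 4 5 = 1 := rfl
@[simp] lemma gU4_4_6 : gramU4 4 6 = 0 := rfl
@[simp] lemma gU4_4_7 : gramU4 4 7 = 0 := rfl
@[simp] lemma gU4_5_0 : gramU4 5 0 = 0 := rfl
@[simp] lemma gU4_5_1 : gramU4 5 1 = 0 := rfl
@[simp] lemma gU4_5_2 : gramU4 5 2 = 0 := rfl
@[simp] lemma gU4_5_3 : gramU4 5 3 = 0 := rfl
@[simp] lemma gU4_5_4 : gramU4 5 4 = 1 := rfl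
@[simp] lemma gU4_5_5 : gramU4 5 5 = 0 := rfl
@[simp] lemma gU4_5_6 : gramU4 5 6 = 0 := rfl
@[simp] lemma gU4_5_7 : gramU4 5 7 = 0 := rfl
@[simp] lemma gU4_6_0 : gramU4 6 0 = 0 := rfl
@[simp] lemma gU4_6_1 : gramU4 6 1 = 0 := rfl
@[simp] lemma gU4_6_2 : gramU4 6 2 = 0 := rfl
@[simp] lemma gU4_6_3 : gramU4 6 3 = 0 := rfl
@[simp] lemma gU4_6_4 : gramU4 6 4 = 0 := rfl
@[simp] lemma gU4_6_5 : gramU4 6 5 = 0 := rfl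
@[simp] lemma gU4_6_6 : gramU4 6 6 = 0 := rfl
@[simp] lemma gU4_6_7 : gramU4 6 7 = 1 := rfl
@[simp] lemma gU4_7_0 : gramU4 7 0 = 0 := rfl
@[simp] lemma gU4_7_1 : gramU4 7 1 = 0 := rfl
@[simp] lemma gU4_7_2 : gramU4 7 2 = 0 := rfl
@[simp] lemma gU4_7_3 : gramU4 7 3 = 0 := rfl
@[simp] lemma gU4_7_4 : gramU4 7 4 = 0 := rfl
@[simp] lemma gU4_7_5 : gramU4 7 5 = 0 := rfl
@[simp] lemma gU4_7_6 : gramU4 7 6 = 1 := rfl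
@[simp] lemma gU4_7_7 : gramU4 7 7 = 0 := rfl
@[simp] lemma gN_0_0 (k : ℤ) : gramU3neg2k k 0 0 = 0 := rfl
@[simp] lemma gN_0_1 (k : ℤ) : gramU3neg2k k 0 1 = 1 := rfl
@[simp] lemma gN_0_2 (k : ℤ) : gramU3neg2k k 0 2 = 0 := rfl
@[simp] lemma gN_0_3 (k : ℤ) : gramU3neg2k k 0 3 = 0 := rfl
@[simp] lemma gN_0_4 (k : ℤ) : gramU3neg2k k 0 4 = 0 := rfl
@[simp] lemma gN_0_5 (k : ℤ) : gramU3neg2k k 0 5 = 0 := rfl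
@[simp] lemma gN_0_6 (k : ℤ) : gramU3neg2k k 0 6 = 0 := rfl
@[simp] lemma gN_1_0 (k : ℤ) : gramU3neg2k k 1 0 = 1 := rfl
@[simp] lemma gN_1_1 (k : ℤ) : gramU3neg2k k 1 1 = 0 := rfl
@[simp] lemma gN_1_2 (k : ℤ) : gramU3neg2k k 1 2 = 0 := rfl
@[simp] lemma gN_1_3 (k : ℤ) : gramU3neg2k k 1 3 = 0 := rfl
@[simp] lemma gN_1_4 (k : ℤ) : gramU3neg2k k 1 4 = 0 := rfl
@[simp] lemma gN_1_5 (k : ℤ) : gramU3neg2k k 1 5 = 0 := rfl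
@[simp] lemma gN_1_6 (k : ℤ) : gramU3neg2k k 1 6 = 0 := rfl
@[simp] lemma gN_2_0 (k : ℤ) : gramU3neg2k k 2 0 = 0 := rfl
@[simp] lemma gN_2_1 (k : ℤ) : gramU3neg2k k 2 1 = 0 := rfl
@[simp] lemma gN_2_2 (k : ℤ) : gramU3neg2k k 2 2 = 0 := rfl
@[simp] lemma gN_2_3 (k : ℤ) : gramU3neg2k k 2 3 = 1 := rfl
@[simp] lemma gN_2_4 (k : ℤ) : gramU3neg2k k 2 4 = 0 := rfl
@[simp] lemma gN_2_5 (k : ℤ) : gramU3neg2k k 2 5 = 0 := rfl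
@[simp] lemma gN_2_6 (k : ℤ) : gramU3neg2k k 2 6 = 0 := rfl
@[simp] lemma gN_3_0 (k : ℤ) : gramU3neg2k k 3 0 = 0 := rfl
@[simp] lemma gN_3_1 (k : ℤ) : gramU3neg2k k 3 1 = 0 := rfl
@[simp] lemma gN_3_2 (k : ℤ) : gramU3neg2k k 3 2 = 1 := rfl
@[simp] lemma gN_3_3 (k : ℤ) : gramU3neg2k k 3 3 = 0 := rfl
@[simp] lemma gN_3_4 (k : ℤ) : gramU3neg2k k 3 4 = 0 := rfl
@[simp] lemma gN_3_5 (k : ℤ) : gramU3neg2k k 3 5 = 0 := rfl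
@[simp] lemma gN_3_6 (k : ℤ) : gramU3neg2k k 3 6 = 0 := rfl
@[simp] lemma gN_4_0 (k : ℤ) : gramU3neg2k k 4 0 = 0 := rfl
@[simp] lemma gN_4_1 (k : ℤ) : gramU3neg2k k 4 1 = 0 := rfl
@[simp] lemma gN_4_2 (k : ℤ) : gramU3neg2k k 4 2 = 0 := rfl
@[simp] lemma gN_4_3 (k : ℤ) : gramU3neg2k k 4 3 = 0 := rfl
@[simp] lemma gN_4_4 (k : ℤ) : gramU3neg2k k 4 4 = 0 := rfl
@[simp] lemma gN_4_5 (k : ℤ) : gramU3neg2k k 4 5 = 1 := rfl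
@[simp] lemma gN_4_6 (k : ℤ) : gramU3neg2k k 4 6 = 0 := rfl
@[simp] lemma gN_5_0 (k : ℤ) : gramU3neg2k k 5 0 = 0 := rfl
@[simp] lemma gN_5_1 (k : ℤ) : gramU3neg2k k 5 1 = 0 := rfl
@[simp] lemma gN_5_2 (k : ℤ) : gramU3neg2k k 5 2 = 0 := rfl
@[simp] lemma gN_5_3 (k : ℤ) : gramU3neg2k k 5 3 = 0 := rfl
@[simp] lemma gN_5_4 (k : ℤ) : gramU3neg2k k 5 4 = 1 := rfl
@[simp] lemma gN_5_5 (k : ℤ) : gramU3neg2k k 5 5 = 0 := rfl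
@[simp] lemma gN_5_6 (k : ℤ) : gramU3neg2k k 5 6 = 0 := rfl
@[simp] lemma gN_6_0 (k : ℤ) : gramU3neg2k k 6 0 = 0 := rfl
@[simp] lemma gN_6_1 (k : ℤ) : gramU3neg2k k 6 1 = 0 := rfl
@[simp] lemma gN_6_2 (k : ℤ) : gramU3neg2k k 6 2 = 0 := rfl
@[simp] lemma gN_6_3 (k : ℤ) : gramU3neg2k k 6 3 = 0 := rfl
@[simp] lemma gN_6_4 (k : ℤ) : gramU3neg2k k 6 4 = 0 := rfl
@[simp] lemma gN_6_5 (k : ℤ) : gramU3neg2k k 6 5 = 0 := rfl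
@[simp] lemma gN_6_6 (k : ℤ) : gramU3neg2k k 6 6 = -(2*(k:ℚ)) := rfl
@[simp] lemma gNm_0_0 (k : ℤ) : gramU3neg2k k (⟨0, by omega⟩ : Fin 7) (⟨0, by omega⟩ : Fin 7) = 0 := rfl
@[simp] lemma gNm_0_1 (k : ℤ) : gramU3neg2k k (⟨0, by omega⟩ : Fin 7) (⟨1, by omega⟩ : Fin 7) = 1 := rfl
@[simp] lemma gNm_0_2 (k : ℤ) : gramU3neg2k k (⟨0, by omega⟩ : Fin 7) (⟨2, by omega⟩ : Fin 7) = 0 := rfl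
@[simp] lemma gNm_0_3 (k : ℤ) : gramU3neg2k k (⟨0, by omega⟩ : Fin 7) (⟨3, by omega⟩ : Fin 7) = 0 := rfl
@[simp] lemma gNm_0_4 (k : ℤ) : gramU3neg2k k (⟨0, by omega⟩ : Fin 7) (⟨4, by omega⟩ : Fin 7) = 0 := rfl
@[simp] lemma gNm_0_5 (k : ℤ) : gramU3neg2k k (⟨0, by omega⟩ : Fin 7) (⟨5, by omega⟩ : Fin 7) = 0 := rfl
@[simp] lemma gNm_0_6 (k : ℤ) : gramU3neg2k k (⟨0, by omega⟩ : Fin 7) (⟨6, by omega⟩ : Fin 7) = 0 := rfl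
@[simp] lemma gNm_1_0 (k : ℤ) : gramU3neg2k k (⟨1, by omega⟩ : Fin 7) (⟨0, by omega⟩ : Fin 7) = 1 := rfl
@[simp] lemma gNm_1_1 (k : ℤ) : gramU3neg2k k (⟨1, by omega⟩ : Fin 7) (⟨1, by omega⟩ : Fin 7) = 0 := rfl
@[simp] lemma gNm_1_2 (k : ℤ) : gramU3neg2k k (⟨1, by omega⟩ : Fin 7) (⟨2, by omega⟩ : Fin 7) = 0 := rfl
@[simp] lemma gNm_1_3 (k : ℤ) : gramU3neg2k k (⟨1, by omega⟩ : Fin 7) (⟨3, by omega⟩ : Fin 7) = 0 := rfl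
@[simp] lemma gNm_1_4 (k : ℤ) : gramU3neg2k k (⟨1, by omega⟩ : Fin 7) (⟨4, by omega⟩ : Fin 7) = 0 := rfl
@[simp] lemma gNm_1_5 (k : ℤ) : gramU3neg2k k (⟨1, by omega⟩ : Fin 7) (⟨5, by omega⟩ : Fin 7) = 0 := rfl
@[simp] lemma gNm_1_6 (k : ℤ) : gramU3neg2k k (⟨1, by omega⟩ : Fin 7) (⟨6, by omega⟩ : Fin 7) = 0 := rfl
@[simp] lemma gNm_2_0 (k : ℤ) : gramU3neg2k k (⟨2, by omega⟩ : Fin 7) (⟨0, by omega⟩ : Fin 7) = 0 := rfl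
@[simp] lemma gNm_2_1 (k : ℤ) : gramU3neg2k k (⟨2, by omega⟩ : Fin 7) (⟨1, by omega⟩ : Fin 7) = 0 := rfl
@[simp] lemma gNm_2_2 (k : ℤ) : gramU3neg2k k (⟨2, by omega⟩ : Fin 7) (⟨2, by omega⟩ : Fin 7) = 0 := rfl
@[simp] lemma gNm_2_3 (k : ℤ) : gramU3neg2k k (⟨2, by omega⟩ : Fin 7) (⟨3, by omega⟩ : Fin 7) = 1 := rfl
@[simp] lemma gNm_2_4 (k : ℤ) : gramU3neg2k k (⟨2, by omega⟩ : Fin 7) (⟨4, by omega⟩ : Fin 7) = 0 := rfl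
@[simp] lemma gNm_2_5 (k : ℤ) : gramU3neg2k k (⟨2, by omega⟩ : Fin 7) (⟨5, by omega⟩ : Fin 7) = 0 := rfl
@[simp] lemma gNm_2_6 (k : ℤ) : gramU3neg2k k (⟨2, by omega⟩ : Fin 7) (⟨6, by omega⟩ : Fin 7) = 0 := rfl
@[simp] lemma gNm_3_0 (k : ℤ) : gramU3neg2k k (⟨3, by omega⟩ : Fin 7) (⟨0, by omega⟩ : Fin 7) = 0 := rfl
@[simp] lemma gNm_3_1 (k : ℤ) : gramU3neg2k k (⟨3, by omega⟩ : Fin 7) (⟨1, by omega⟩ : Fin 7) = 0 := rfl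
@[simp] lemma gNm_3_2 (k : ℤ) : gramU3neg2k k (⟨3, by omega⟩ : Fin 7) (⟨2, by omega⟩ : Fin 7) = 1 := rfl
@[simp] lemma gNm_3_3 (k : ℤ) : gramU3neg2k k (⟨3, by omega⟩ : Fin 7) (⟨3, by omega⟩ : Fin 7) = 0 := rfl
@[simp] lemma gNm_3_4 (k : ℤ) : gramU3neg2k k (⟨3, by omega⟩ : Fin 7) (⟨4, by omega⟩ : Fin 7) = 0 := rfl
@[simp] lemma gNm_3_5 (k : ℤ) : gramU3neg2k k (⟨3, by omega⟩ : Fin 7) (⟨5, by omega⟩ : Fin 7) = 0 := rfl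
@[simp] lemma gNm_3_6 (k : ℤ) : gramU3neg2k k (⟨3, by omega⟩ : Fin 7) (⟨6, by omega⟩ : Fin 7) = 0 := rfl
@[simp] lemma gNm_4_0 (k : ℤ) : gramU3neg2k k (⟨4, by omega⟩ : Fin 7) (⟨0, by omega⟩ : Fin 7) = 0 := rfl
@[simp] lemma gNm_4_1 (k : ℤ) : gramU3neg2k k (⟨4, by omega⟩ : Fin 7) (⟨1, by omega⟩ : Fin 7) = 0 := rfl
@[simp] lemma gNm_4_2 (k : ℤ) : gramU3neg2k k (⟨4, by omega⟩ : Fin 7) (⟨2, by omega⟩ : Fin 7) = 0 := rfl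
@[simp] lemma gNm_4_3 (k : ℤ) : gramU3neg2k k (⟨4, by omega⟩ : Fin 7) (⟨3, by omega⟩ : Fin 7) = 0 := rfl
@[simp] lemma gNm_4_4 (k : ℤ) : gramU3neg2k k (⟨4, by omega⟩ : Fin 7) (⟨4, by omega⟩ : Fin 7) = 0 := rfl
@[simp] lemma gNm_4_5 (k : ℤ) : gramU3neg2k k (⟨4, by omega⟩ : Fin 7) (⟨5, by omega⟩ : Fin 7) = 1 := rfl
@[simp] lemma gNm_4_6 (k : ℤ) : gramU3neg2k k (⟨4, by omega⟩ : Fin 7) (⟨6, by omega⟩ : Fin 7) = 0 := rfl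
@[simp] lemma gNm_5_0 (k : ℤ) : gramU3neg2k k (⟨5, by omega⟩ : Fin 7) (⟨0, by omega⟩ : Fin 7) = 0 := rfl
@[simp] lemma gNm_5_1 (k : ℤ) : gramU3neg2k k (⟨5, by omega⟩ : Fin 7) (⟨1, by omega⟩ : Fin 7) = 0 := rfl
@[simp] lemma gNm_5_2 (k : ℤ) : gramU3neg2k k (⟨5, by omega⟩ : Fin 7) (⟨2, by omega⟩ : Fin 7) = 0 := rfl
@[simp] lemma gNm_5_3 (k : ℤ) : gramU3neg2k k (⟨5, by omega⟩ : Fin 7) (⟨3, by omega⟩ : Fin 7) = 0 := rfl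
@[simp] lemma gNm_5_4 (k : ℤ) : gramU3neg2k k (⟨5, by omega⟩ : Fin 7) (⟨4, by omega⟩ : Fin 7) = 1 := rfl
@[simp] lemma gNm_5_5 (k : ℤ) : gramU3neg2k k (⟨5, by omega⟩ : Fin 7) (⟨5, by omega⟩ : Fin 7) = 0 := rfl
@[simp] lemma gNm_5_6 (k : ℤ) : gramU3neg2k k (⟨5, by omega⟩ : Fin 7) (⟨6, by omega⟩ : Fin 7) = 0 := rfl
@[simp] lemma gNm_6_0 (k : ℤ) : gramU3neg2k k (⟨6, by omega⟩ : Fin 7) (⟨0, by omega⟩ : Fin 7) = 0 := rfl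
@[simp] lemma gNm_6_1 (k : ℤ) : gramU3neg2k k (⟨6, by omega⟩ : Fin 7) (⟨1, by omega⟩ : Fin 7) = 0 := rfl
@[simp] lemma gNm_6_2 (k : ℤ) : gramU3neg2k k (⟨6, by omega⟩ : Fin 7) (⟨2, by omega⟩ : Fin 7) = 0 := rfl
@[simp] lemma gNm_6_3 (k : ℤ) : gramU3neg2k k (⟨6, by omega⟩ : Fin 7) (⟨3, by omega⟩ : Fin 7) = 0 := rfl
@[simp] lemma gNm_6_4 (k : ℤ) : gramU3neg2k k (⟨6, by omega⟩ : Fin 7) (⟨4, by omega⟩ : Fin 7) = 0 := rfl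
@[simp] lemma gNm_6_5 (k : ℤ) : gramU3neg2k k (⟨6, by omega⟩ : Fin 7) (⟨5, by omega⟩ : Fin 7) = 0 := rfl
@[simp] lemma gNm_6_6 (k : ℤ) : gramU3neg2k k (⟨6, by omega⟩ : Fin 7) (⟨6, by omega⟩ : Fin 7) = -(2*(k:ℚ)) := rfl
end gramEntries

/-- Integer version of the Gram matrix. -/
def gramZ : Matrix (Fin 8) (Fin 8) ℤ :=
  !![0,1,0,0,0,0,0,0; 1,0,0,0,0,0,0,0;
     0,0,0,1,0,0,0,0; 0,0,1,0,0,0,0,0;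
     0,0,0,0,0,1,0,0; 0,0,0,0,1,0,0,0;
     0,0,0,0,0,0,0,1; 0,0,0,0,0,0,1,0]

lemma gram_cast : ∀ i j, gramU4 i j = ((gramZ i j : ℤ) : ℚ) := by
  intro i j; fin_cases i <;> fin_cases j <;> rfl

section Setup
set_option linter.unusedSectionVars false

variable {V : Type*} [AddCommGroup V] [Module ℚ V] [FiniteDimensional ℚ V]

/-- A "good basis": an integral basis of `L` which is a `ℚ`-basis of `V` with
Gram matrix `gramU4`. -/
def GB (B : V →ₗ[ℚ] V →ₗ[ℚ] ℚ) (L : Submodule ℤ V) (u : Fin 8 → V) : Prop :=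
  Submodule.span ℤ (Set.range u) = L ∧ LinearIndependent ℚ u ∧
    Submodule.span ℚ (Set.range u) = ⊤ ∧ ∀ i j, B (u i) (u j) = gramU4 i j

/-- `w` has coordinates `n` in some good basis. -/
def Reach (B : V →ₗ[ℚ] V →ₗ[ℚ] ℚ) (L : Submodule ℤ V) (w : V) (n : Fin 8 → ℤ) : Prop :=
  ∃ u, GB B L u ∧ w = ∑ i, n i • u i

lemma sum_zsmul_comm (u : Fin 8 → V) (M : Matrix (Fin 8) (Fin 8) ℤ) (f : Fin 8 → ℤ) :
    ∑ j, f j • (∑ i, M i j • u i) = ∑ i, (∑ j, M i j * f j) • u i := by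
  simp_rw [Finset.smul_sum, smul_smul]
  rw [Finset.sum_comm]
  simp_rw [← Finset.sum_smul]
  refine Finset.sum_congr rfl fun i _ => ?_
  congr 1
  exact Finset.sum_congr rfl fun j _ => mul_comm _ _

lemma B_sum_sum (B : V →ₗ[ℚ] V →ₗ[ℚ] ℚ) (u x : Fin 8 → V) (f g : Fin 8 → ℤ) :
    B (∑ i, f i • u i) (∑ j, g j • x j)
      = ∑ i, ∑ j, (f i : ℚ) * (g j : ℚ) * B (u i) (x j) := by
  simp_rw [← Int.cast_smul_eq_zsmul ℚ, map_sum, map_smul, LinearMap.sum_apply,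
    LinearMap.smul_apply, smul_eq_mul, Finset.mul_sum, mul_assoc]
  rw [Finset.sum_comm]
  exact Finset.sum_congr rfl fun i _ => Finset.sum_congr rfl fun j _ => by ring

lemma zsmul_mem_Q (p : Submodule ℚ V) (n : ℤ) {x : V} (hx : x ∈ p) : n • x ∈ p := by
  rw [← Int.cast_smul_eq_zsmul ℚ]; exact p.smul_mem _ hx

lemma sum_gram_eq (A G : Matrix (Fin 8) (Fin 8) ℤ) (i j : Fin 8) :
    ∑ a, ∑ b, A a i * A b j * G a b = (A.transpose * G * A) i j := by
  simp only [Matrix.mul_apply, Finset.sum_mul, Matrix.transpose_apply]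
  rw [Finset.sum_comm]
  exact Finset.sum_congr rfl fun a _ =>
    Finset.sum_congr rfl fun b _ => by ring

/-- Master move lemma: we may change the good basis by any integral matrix
preserving the Gram matrix. -/
lemma Reach.move {B : V →ₗ[ℚ] V →ₗ[ℚ] ℚ} {L : Submodule ℤ V} {w : V} {n : Fin 8 → ℤ}
    (C C' : Matrix (Fin 8) (Fin 8) ℤ)
    (h2 : C' * C = 1)
    (hGZ : ∀ i j, (∑ a, ∑ b, (C' a i) * (C' b j) * gramZ a b) = gramZ i j)
    (h : Reach B L w n) : Reach B L w (C.mulVec n) := by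
  have hG : ∀ i j, (∑ a, ∑ b, (C' a i : ℚ) * (C' b j : ℚ) * gramU4 a b) = gramU4 i j := by
    intro i j
    simp_rw [gram_cast]
    exact_mod_cast congrArg (fun z : ℤ => (z : ℚ)) (hGZ i j)
  obtain ⟨u, ⟨huL, huli, huspan, huG⟩, hwu⟩ := h
  set u' : Fin 8 → V := fun j => ∑ i, C' i j • u i with hu'
  have hinv : ∀ p, u p = ∑ j, C j p • u' j := by
    intro p
    rw [hu']
    rw [sum_zsmul_comm u C' (fun j => C j p)]
    have : ∀ i, (∑ j, C' i j * C j p) = (1 : Matrix (Fin 8) (Fin 8) ℤ) i p := by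
      intro i; rw [← h2, Matrix.mul_apply]
    simp_rw [this, Matrix.one_apply]
    simp [ite_smul]
  have hspanZ : Submodule.span ℤ (Set.range u') = L := by
    apply le_antisymm
    · rw [Submodule.span_le]
      rintro _ ⟨j, rfl⟩
      rw [← huL, hu']
      exact Submodule.sum_mem _ fun i _ =>
        Submodule.smul_mem _ _ (Submodule.subset_span ⟨i, rfl⟩)
    · rw [← huL, Submodule.span_le]
      rintro _ ⟨p, rfl⟩
      rw [hinv p]
      exact Submodule.sum_mem _ fun j _ =>
        Submodule.smul_mem _ _ (Submodule.subset_span ⟨j, rfl⟩)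
  have hspanQ : Submodule.span ℚ (Set.range u') = ⊤ := by
    apply le_antisymm le_top
    rw [← huspan, Submodule.span_le]
    rintro _ ⟨p, rfl⟩
    rw [hinv p]
    exact Submodule.sum_mem _ fun j _ =>
      zsmul_mem_Q _ _ (Submodule.subset_span ⟨j, rfl⟩)
  have hfinrank : Module.finrank ℚ V = 8 := by
    have hb : Module.Basis (Fin 8) ℚ V := Module.Basis.mk huli (by rw [huspan])
    simp [Module.finrank_eq_card_basis hb]
  have hli : LinearIndependent ℚ u' := by
    apply linearIndependent_of_top_le_span_of_card_eq_finrank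
    · rw [hspanQ]
    · simp [hfinrank]
  have hGram : ∀ i j, B (u' i) (u' j) = gramU4 i j := by
    intro i j
    rw [hu']
    simp only []
    rw [B_sum_sum]
    simp_rw [huG]
    exact hG i j
  refine ⟨u', ⟨hspanZ, hli, hspanQ, hGram⟩, ?_⟩
  rw [hwu]
  simp_rw [hinv]
  rw [sum_zsmul_comm u' C n]
  rfl


lemma B_sum_sumQ (B : V →ₗ[ℚ] V →ₗ[ℚ] ℚ) (u : Fin 8 → V) (f g : Fin 8 → ℚ) :
    B (∑ i, f i • u i) (∑ j, g j • u j) = ∑ i, ∑ j, f i * g j * B (u i) (u j) := by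
  simp_rw [map_sum, map_smul, LinearMap.sum_apply, LinearMap.smul_apply,
    smul_eq_mul, Finset.mul_sum, mul_assoc]
  rw [Finset.sum_comm]
  exact Finset.sum_congr rfl fun i _ => Finset.sum_congr rfl fun j _ => by ring

lemma Bval {B : V →ₗ[ℚ] V →ₗ[ℚ] ℚ} {u : Fin 8 → V}
    (huG : ∀ i j, B (u i) (u j) = gramU4 i j) (f g : Fin 8 → ℚ) :
    B (∑ i, f i • u i) (∑ j, g j • u j)
      = f 0 * g 1 + f 1 * g 0 + f 2 * g 3 + f 3 * g 2
        + f 4 * g 5 + f 5 * g 4 + f 6 * g 7 + f 7 * g 6 := by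
  rw [B_sum_sumQ]
  simp_rw [huG]
  simp [Fin.sum_univ_eight]
  try ring

end Setup

section Generators
open Matrix
set_option linter.unusedSectionVars false

/-- Eichler-type transvection acting on coordinates by
`(p,q,r,s,...) ↦ (p + t r, q, r, s - t q, ...)`. -/
def T1C (t : ℤ) : Matrix (Fin 8) (Fin 8) ℤ :=
  1 + Matrix.single 0 2 t - Matrix.single 3 1 t
def T1C' (t : ℤ) : Matrix (Fin 8) (Fin 8) ℤ :=
  1 - Matrix.single 0 2 t + Matrix.single 3 1 t

lemma gramZ_eq : gramZ = Matrix.single 0 1 1 + Matrix.single 1 0 1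
    + Matrix.single 2 3 1 + Matrix.single 3 2 1 + Matrix.single 4 5 1
    + Matrix.single 5 4 1 + Matrix.single 6 7 1 + Matrix.single 7 6 1 := by decide

lemma Emul (i j k l : Fin 8) (c d : ℤ) :
    Matrix.single i j c * Matrix.single k l d
      = if j = k then Matrix.single i l (c*d) else 0 := by
  split
  · subst ‹j = k›; rw [Matrix.single_mul_single_same]
  · rw [Matrix.single_mul_single_of_ne (h := ‹j ≠ k›)]

lemma transpose_sbm (i j : Fin 8) (c : ℤ) :
    (Matrix.single i j c).transpose = Matrix.single j i c := by
  ext a b; simp [Matrix.single, and_comm, Matrix.transpose_apply]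

lemma T1C'_mul (t : ℤ) : (T1C' t) * (T1C t) = 1 := by
  simp only [T1C, T1C', mul_add, mul_sub, add_mul, sub_mul, one_mul, mul_one,
    Matrix.single_mul_single_of_ne, ne_eq, Fin.reduceEq, not_false_eq_true]
  abel

lemma T1C'_gram (t : ℤ) :
    ∀ i j, (∑ a, ∑ b, (T1C' t) a i * (T1C' t) b j * gramZ a b) = gramZ i j := by
  intro i j
  rw [sum_gram_eq]
  have : (T1C' t).transpose * gramZ * (T1C' t) = gramZ := by
    simp only [T1C', transpose_add, transpose_sub, transpose_one, transpose_sbm]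
    rw [gramZ_eq]
    simp (config := {decide := true}) only [mul_add, mul_sub, add_mul, sub_mul,
      one_mul, mul_one, Emul, if_true, if_false, mul_zero, zero_mul, sub_zero,
      add_zero, zero_add, mul_neg, neg_mul]
    abel
  rw [this]

def W1C : Matrix (Fin 8) (Fin 8) ℤ :=
  Matrix.single 0 1 1 + Matrix.single 1 0 1 + Matrix.single 2 2 1 + Matrix.single 3 3 1
    + Matrix.single 4 4 1 + Matrix.single 5 5 1 + Matrix.single 6 6 1 + Matrix.single 7 7 1
def W2C : Matrix (Fin 8) (Fin 8) ℤ :=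
  Matrix.single 0 0 1 + Matrix.single 1 1 1 + Matrix.single 2 3 1 + Matrix.single 3 2 1
    + Matrix.single 4 4 1 + Matrix.single 5 5 1 + Matrix.single 6 6 1 + Matrix.single 7 7 1
def P12C : Matrix (Fin 8) (Fin 8) ℤ :=
  Matrix.single 0 2 1 + Matrix.single 1 3 1 + Matrix.single 2 0 1 + Matrix.single 3 1 1
    + Matrix.single 4 4 1 + Matrix.single 5 5 1 + Matrix.single 6 6 1 + Matrix.single 7 7 1
def P23C : Matrix (Fin 8) (Fin 8) ℤ :=
  Matrix.single 0 0 1 + Matrix.single 1 1 1 + Matrix.single 2 4 1 + Matrix.single 3 5 1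
    + Matrix.single 4 2 1 + Matrix.single 5 3 1 + Matrix.single 6 6 1 + Matrix.single 7 7 1
def P13C : Matrix (Fin 8) (Fin 8) ℤ :=
  Matrix.single 0 4 1 + Matrix.single 1 5 1 + Matrix.single 2 2 1 + Matrix.single 3 3 1
    + Matrix.single 4 0 1 + Matrix.single 5 1 1 + Matrix.single 6 6 1 + Matrix.single 7 7 1
def P24C : Matrix (Fin 8) (Fin 8) ℤ :=
  Matrix.single 0 0 1 + Matrix.single 1 1 1 + Matrix.single 2 6 1 + Matrix.single 3 7 1
    + Matrix.single 4 4 1 + Matrix.single 5 5 1 + Matrix.single 6 2 1 + Matrix.single 7 3 1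
def N1C : Matrix (Fin 8) (Fin 8) ℤ :=
  Matrix.single 0 0 (-1) + Matrix.single 1 1 (-1) + Matrix.single 2 2 1 + Matrix.single 3 3 1
    + Matrix.single 4 4 1 + Matrix.single 5 5 1 + Matrix.single 6 6 1 + Matrix.single 7 7 1


variable {V : Type*} [AddCommGroup V] [Module ℚ V] [FiniteDimensional ℚ V]
variable {B : V →ₗ[ℚ] V →ₗ[ℚ] ℚ} {L : Submodule ℤ V} {w : V}

lemma reach_T1 (t : ℤ) {p q r s a b c d : ℤ} (h : Reach B L w ![p,q,r,s,a,b,c,d]) :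
    Reach B L w ![p + t*r, q, r, s - t*q, a, b, c, d] := by
  have h2 := h.move (T1C t) (T1C' t) (T1C'_mul t) (T1C'_gram t)
  have e : (T1C t).mulVec ![p,q,r,s,a,b,c,d] = ![p + t*r, q, r, s - t*q, a,b,c,d] := by
    funext i
    fin_cases i <;>
      simp [T1C, Matrix.mulVec, dotProduct, Fin.sum_univ_eight,
        Matrix.single, Matrix.one_apply] <;> ring
  rwa [e] at h2

lemma reach_W1 {p q r s a b c d : ℤ} (h : Reach B L w ![p,q,r,s,a,b,c,d]) :
    Reach B L w ![q,p,r,s,a,b,c,d] := by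
  have h2 := h.move W1C W1C (by decide) (by intro i j; fin_cases i <;> fin_cases j <;> decide)
  have e : W1C.mulVec ![p,q,r,s,a,b,c,d] = ![q,p,r,s,a,b,c,d] := by
    funext i
    fin_cases i <;>
      simp [W1C, Matrix.mulVec, dotProduct, Fin.sum_univ_eight, Matrix.single]
  rwa [e] at h2

lemma reach_W2 {p q r s a b c d : ℤ} (h : Reach B L w ![p,q,r,s,a,b,c,d]) :
    Reach B L w ![p,q,s,r,a,b,c,d] := by
  have h2 := h.move W2C W2C (by decide) (by intro i j; fin_cases i <;> fin_cases j <;> decide)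
  have e : W2C.mulVec ![p,q,r,s,a,b,c,d] = ![p,q,s,r,a,b,c,d] := by
    funext i
    fin_cases i <;>
      simp [W2C, Matrix.mulVec, dotProduct, Fin.sum_univ_eight, Matrix.single]
  rwa [e] at h2

lemma reach_P12 {p q r s a b c d : ℤ} (h : Reach B L w ![p,q,r,s,a,b,c,d]) :
    Reach B L w ![r,s,p,q,a,b,c,d] := by
  have h2 := h.move P12C P12C (by decide) (by intro i j; fin_cases i <;> fin_cases j <;> decide)
  have e : P12C.mulVec ![p,q,r,s,a,b,c,d] = ![r,s,p,q,a,b,c,d] := by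
    funext i
    fin_cases i <;>
      simp [P12C, Matrix.mulVec, dotProduct, Fin.sum_univ_eight, Matrix.single]
  rwa [e] at h2

lemma reach_P23 {p q r s a b c d : ℤ} (h : Reach B L w ![p,q,r,s,a,b,c,d]) :
    Reach B L w ![p,q,a,b,r,s,c,d] := by
  have h2 := h.move P23C P23C (by decide) (by intro i j; fin_cases i <;> fin_cases j <;> decide)
  have e : P23C.mulVec ![p,q,r,s,a,b,c,d] = ![p,q,a,b,r,s,c,d] := by
    funext i
    fin_cases i <;>
      simp [P23C, Matrix.mulVec, dotProduct, Fin.sum_univ_eight, Matrix.single]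
  rwa [e] at h2

lemma reach_P13 {p q r s a b c d : ℤ} (h : Reach B L w ![p,q,r,s,a,b,c,d]) :
    Reach B L w ![a,b,r,s,p,q,c,d] := by
  have h2 := h.move P13C P13C (by decide) (by intro i j; fin_cases i <;> fin_cases j <;> decide)
  have e : P13C.mulVec ![p,q,r,s,a,b,c,d] = ![a,b,r,s,p,q,c,d] := by
    funext i
    fin_cases i <;>
      simp [P13C, Matrix.mulVec, dotProduct, Fin.sum_univ_eight, Matrix.single]
  rwa [e] at h2

lemma reach_P24 {p q r s a b c d : ℤ} (h : Reach B L w ![p,q,r,s,a,b,c,d]) :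
    Reach B L w ![p,q,c,d,a,b,r,s] := by
  have h2 := h.move P24C P24C (by decide) (by intro i j; fin_cases i <;> fin_cases j <;> decide)
  have e : P24C.mulVec ![p,q,r,s,a,b,c,d] = ![p,q,c,d,a,b,r,s] := by
    funext i
    fin_cases i <;>
      simp [P24C, Matrix.mulVec, dotProduct, Fin.sum_univ_eight, Matrix.single]
  rwa [e] at h2

lemma reach_N1 {p q r s a b c d : ℤ} (h : Reach B L w ![p,q,r,s,a,b,c,d]) :
    Reach B L w ![-p,-q,r,s,a,b,c,d] := by
  have h2 := h.move N1C N1C (by decide) (by intro i j; fin_cases i <;> fin_cases j <;> decide)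
  have e : N1C.mulVec ![p,q,r,s,a,b,c,d] = ![-p,-q,r,s,a,b,c,d] := by
    funext i
    fin_cases i <;>
      simp [N1C, Matrix.mulVec, dotProduct, Fin.sum_univ_eight, Matrix.single]
  rwa [e] at h2

lemma reach_T3 (t : ℤ) {p q r s a b c d : ℤ} (h : Reach B L w ![p,q,r,s,a,b,c,d]) :
    Reach B L w ![p, q + t*s, r - t*p, s, a, b, c, d] :=
  reach_W1 (reach_W2 (reach_T1 t (reach_W2 (reach_W1 h))))

lemma reach_T4 (t : ℤ) {p q r s a b c d : ℤ} (h : Reach B L w ![p,q,r,s,a,b,c,d]) :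
    Reach B L w ![p, q + t*r, r, s - t*p, a, b, c, d] :=
  reach_W1 (reach_T1 t (reach_W1 h))

end Generators

section Euclid
set_option linter.unusedSectionVars false
variable {V : Type*} [AddCommGroup V] [Module ℚ V] [FiniteDimensional ℚ V]
variable {B : V →ₗ[ℚ] V →ₗ[ℚ] ℚ} {L : Submodule ℤ V} {w : V}

lemma euclidA : ∀ (N : ℕ) (p q r s a b c d : ℤ), p.natAbs ≤ N → 0 < p →
    Reach B L w ![p,q,r,s,a,b,c,d] →
    ∃ p' q' : ℤ, (∀ e : ℤ, e ∣ p' → e ∣ q' → e ∣ p ∧ e ∣ q ∧ e ∣ r ∧ e ∣ s) ∧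
      Reach B L w ![p',q',0,0,a,b,c,d] := by
  intro N
  induction N with
  | zero => intro p q r s a b c d hN hp h; exfalso; omega
  | succ N ih =>
    intro p q r s a b c d hN hp h
    have hp0 : p ≠ 0 := ne_of_gt hp
    by_cases hr : p ∣ r
    · by_cases hs : p ∣ s
      · obtain ⟨r', rfl⟩ := hr
        obtain ⟨s', rfl⟩ := hs
        have h1 := reach_T3 r' h
        rw [show p*r' - r'*p = 0 from by ring] at h1
        have h2 := reach_T4 s' h1
        rw [show p*s' - s'*p = 0 from by ring, mul_zero, add_zero] at h2
        refine ⟨p, q + r'*(p*s'), fun e hep heq => ⟨hep, ?_, hep.mul_right r', hep.mul_right s'⟩, h2⟩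
        have h3 : e ∣ r'*(p*s') := (hep.mul_right s').mul_left r'
        simpa using dvd_sub heq h3
      · -- p ∤ s : swap r and s, then do the Euclid step
        have h' := reach_W2 h
        set t := s / p with ht
        have h1 := reach_T3 t h'
        rw [show s - t*p = s % p from by rw [Int.emod_def]; ring] at h1
        have h2 := reach_P12 h1
        have hmodpos : 0 < s % p := by
          rcases (Int.emod_nonneg s hp0).lt_or_eq with h0 | h0
          · exact h0
          · exact absurd (Int.dvd_of_emod_eq_zero h0.symm) hs
        have hlt : (s % p).natAbs ≤ N := by
          have := Int.emod_lt_of_pos s hp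
          omega
        obtain ⟨p', q', htr, hre⟩ := ih (s % p) r p (q + t*r) a b c d hlt hmodpos h2
        refine ⟨p', q', fun e h1e h2e => ?_, hre⟩
        obtain ⟨hm, hr', hp', hq'⟩ := htr e h1e h2e
        refine ⟨hp', ?_, hr', ?_⟩
        · have : e ∣ t*r := hr'.mul_left t
          simpa using dvd_sub hq' this
        · have hse : s = s % p + p * t := by rw [Int.emod_def]; ring
          rw [hse]
          exact dvd_add hm (hp'.mul_right t)
    · -- p ∤ r : Euclid step
      set t := r / p with ht
      have h1 := reach_T3 t h
      rw [show r - t*p = r % p from by rw [Int.emod_def]; ring] at h1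
      have h2 := reach_P12 h1
      have hmodpos : 0 < r % p := by
        rcases (Int.emod_nonneg r hp0).lt_or_eq with h0 | h0
        · exact h0
        · exact absurd (Int.dvd_of_emod_eq_zero h0.symm) hr
      have hlt : (r % p).natAbs ≤ N := by
        have := Int.emod_lt_of_pos r hp
        omega
      obtain ⟨p', q', htr, hre⟩ := ih (r % p) s p (q + t*s) a b c d hlt hmodpos h2
      refine ⟨p', q', fun e h1e h2e => ?_, hre⟩
      obtain ⟨hm, hs', hp', hq'⟩ := htr e h1e h2e
      refine ⟨hp', ?_, ?_, hs'⟩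
      · have : e ∣ t*s := hs'.mul_left t
        simpa using dvd_sub hq' this
      · have hre' : r = r % p + p * t := by rw [Int.emod_def]; ring
        rw [hre']
        exact dvd_add hm (hp'.mul_right t)

lemma euclidA' (p q r s a b c d : ℤ) (hp : p ≠ 0) (h : Reach B L w ![p,q,r,s,a,b,c,d]) :
    ∃ p' q' : ℤ, (∀ e : ℤ, e ∣ p' → e ∣ q' → e ∣ p ∧ e ∣ q ∧ e ∣ r ∧ e ∣ s) ∧
      Reach B L w ![p',q',0,0,a,b,c,d] := by
  rcases hp.lt_or_gt with hneg | hpos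
  · have h1 := reach_N1 h
    obtain ⟨p', q', tr, hre⟩ := euclidA (-p).natAbs (-p) (-q) r s a b c d le_rfl (by omega) h1
    refine ⟨p', q', fun e h1e h2e => ?_, hre⟩
    obtain ⟨e1, e2, e3, e4⟩ := tr e h1e h2e
    exact ⟨dvd_neg.mp e1, dvd_neg.mp e2, e3, e4⟩
  · exact euclidA p.natAbs p q r s a b c d le_rfl hpos h

lemma euclidB (p q a b c d : ℤ) (h : Reach B L w ![p,q,0,0,a,b,c,d]) :
    ∃ g t' : ℤ, g ∣ p ∧ g ∣ q ∧ g ∣ t' ∧ Reach B L w ![g,t',0,0,a,b,c,d] := by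
  by_cases hpq : p = 0 ∧ q = 0
  · obtain ⟨rfl, rfl⟩ := hpq
    exact ⟨0, 0, dvd_refl 0, dvd_refl 0, dvd_refl 0, h⟩
  · set A := Int.gcdA p q with hA
    set B' := Int.gcdB p q with hB
    set g : ℤ := (Int.gcd p q : ℤ) with hg
    have hgp : g ∣ p := Int.gcd_dvd_left p q
    have hgq : g ∣ q := Int.gcd_dvd_right p q
    have hbz : g = p * A + q * B' := Int.gcd_eq_gcd_ab p q
    have h1 := reach_T4 (-A) h
    rw [mul_zero, add_zero, show (0:ℤ) - -A*p = p*A from by ring] at h1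
    have h2 := reach_T1 (-B') h1
    rw [mul_zero, add_zero, show p*A - -B'*q = p*A + q*B' from by ring, ← hbz] at h2
    have h3 := reach_W2 h2
    have h4 := reach_P12 h3
    have h5 := reach_T3 (p / g) h4
    rw [zero_add, show p - p/g*g = 0 from by rw [Int.ediv_mul_cancel hgp]; ring] at h5
    have h6 := reach_T4 (q / g) h5
    rw [mul_zero, add_zero, show q - q/g*g = 0 from by rw [Int.ediv_mul_cancel hgq]; ring] at h6
    exact ⟨g, p/g*q, hgp, hgq, hgq.mul_left _, h6⟩

lemma pairFront (p q r s a b c d : ℤ) (h : Reach B L w ![p,q,r,s,a,b,c,d]) :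
    ∃ g t' : ℤ, (g ∣ p ∧ g ∣ q ∧ g ∣ r ∧ g ∣ s ∧ g ∣ t') ∧
      Reach B L w ![g,t',0,0,a,b,c,d] := by
  by_cases hp : p ≠ 0
  · obtain ⟨p', q', tr, hre⟩ := euclidA' p q r s a b c d hp h
    obtain ⟨g, t', hgp', hgq', hgt, hre2⟩ := euclidB p' q' a b c d hre
    obtain ⟨e1, e2, e3, e4⟩ := tr g hgp' hgq'
    exact ⟨g, t', ⟨e1, e2, e3, e4, hgt⟩, hre2⟩
  · push_neg at hp
    by_cases hq : q ≠ 0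
    · have h1 := reach_W1 h
      obtain ⟨p', q', tr, hre⟩ := euclidA' q p r s a b c d hq h1
      obtain ⟨g, t', hgp', hgq', hgt, hre2⟩ := euclidB p' q' a b c d hre
      obtain ⟨e1, e2, e3, e4⟩ := tr g hgp' hgq'
      exact ⟨g, t', ⟨e2, e1, e3, e4, hgt⟩, hre2⟩
    · push_neg at hq
      subst hp hq
      have h1 := reach_P12 h
      obtain ⟨g, t', hgr, hgs, hgt, hre2⟩ := euclidB r s a b c d h1
      exact ⟨g, t', ⟨dvd_zero g, dvd_zero g, hgr, hgs, hgt⟩, hre2⟩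

lemma fullReduce (n0 n1 n2 n3 n4 n5 n6 n7 : ℤ)
    (h : Reach B L w ![n0,n1,n2,n3,n4,n5,n6,n7]) :
    ∃ g t' : ℤ, (g ∣ n0 ∧ g ∣ n1 ∧ g ∣ n2 ∧ g ∣ n3 ∧ g ∣ n4 ∧ g ∣ n5 ∧ g ∣ n6 ∧ g ∣ n7
        ∧ g ∣ t') ∧ Reach B L w ![g,t',0,0,0,0,0,0] := by
  have h1 := reach_P13 h
  have h2 := reach_P24 h1
  obtain ⟨g1, t1, hd1, h3⟩ := pairFront n4 n5 n6 n7 n0 n1 n2 n3 h2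
  have h4 := reach_P24 h3
  have h5 := reach_P13 h4
  have h6 := reach_P12 h5
  have h7 := reach_P23 h6
  obtain ⟨g2, t2, hd2, h8⟩ := pairFront n2 n3 g1 t1 n0 n1 0 0 h7
  have h9 := reach_P23 h8
  have h10 := reach_P12 h9
  obtain ⟨g3, t3, hd3, h11⟩ := pairFront n0 n1 g2 t2 0 0 0 0 h10
  obtain ⟨d0, d1, dg2, dt2, dt3⟩ := hd3
  obtain ⟨d2, d3, dg1, dt1, _⟩ := hd2
  obtain ⟨d4, d5, d6, d7, _⟩ := hd1
  exact ⟨g3, t3, ⟨d0, d1, dg2.trans d2, dg2.trans d3, (dg2.trans dg1).trans d4,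
    (dg2.trans dg1).trans d5, (dg2.trans dg1).trans d6, (dg2.trans dg1).trans d7, dt3⟩, h11⟩

end Euclid

end Stmt10Aux

set_option maxHeartbeats 2000000 in
/-- Let `Λ̃` be an even unimodular lattice of signature `(4,4)`, hence
(by Milnor) isometric to `U^{⊕4}`: concretely, a full lattice `L` in a `ℚ`-quadratic
space with a `ℤ`-basis `b` whose Gram matrix is that of `U^{⊕4}`.  Let `w ∈ L` be
primitive with `w² = 2k > 0`, let `m ≥ 1`, and set `v = m • w`.  Then the orthogonal
complement `v^⊥` of `v` in `L` is an even lattice of rank `7`, of signature `(3,4)`,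
isometric to `U^{⊕3} ⊕ ⟨-2k⟩`: it admits a `ℤ`-basis `c` (seven `ℚ`-linearly independent
vectors of `L ∩ v^⊥` spanning it over `ℤ`) with Gram matrix that of `U^{⊕3} ⊕ ⟨-2k⟩`. -/
theorem stmt10 {V : Type*} [AddCommGroup V] [Module ℚ V] [FiniteDimensional ℚ V]
    (B : V →ₗ[ℚ] V →ₗ[ℚ] ℚ)
    (hsymm : ∀ v w, B v w = B w v)
    (hnondeg : ∀ v, (∀ w, B v w = 0) → v = 0)
    (L : Submodule ℤ V)
    (b : Fin 8 → V) (hbL : Submodule.span ℤ (Set.range b) = L)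
    (hbli : LinearIndependent ℚ b)
    (hbspan : Submodule.span ℚ (Set.range b) = ⊤)
    (hGram : ∀ i j, B (b i) (b j) = gramU4 i j)
    (k m : ℤ) (hk : 0 < k) (hm : 1 ≤ m)
    (w : V) (hw : w ∈ L)
    (hwprim : ∀ x ∈ L, ∀ n : ℤ, w = n • x → n = 1 ∨ n = -1)
    (hww : B w w = 2 * (k : ℚ))
    (v : V) (hv : v = (m : ℚ) • w) :
    ∃ c : Fin 7 → V,
      (∀ i, c i ∈ L ∧ B (c i) v = 0) ∧
      LinearIndependent ℚ c ∧
      Submodule.span ℤ (Set.range c)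
        = L ⊓ Submodule.restrictScalars ℤ (LinearMap.ker (B.flip v)) ∧
      (∀ i j, B (c i) (c j) = gramU3neg2k k i j) := by
  classical
  -- coordinates of w in the basis b
  have hw' : w ∈ Submodule.span ℤ (Set.range b) := by rw [hbL]; exact hw
  obtain ⟨n, hn⟩ := (Submodule.mem_span_range_iff_exists_fun ℤ).mp hw'
  have hre0 : Stmt10Aux.Reach B L w ![n 0, n 1, n 2, n 3, n 4, n 5, n 6, n 7] := by
    refine ⟨b, ⟨hbL, hbli, hbspan, hGram⟩, ?_⟩
    rw [← hn]
    refine Finset.sum_congr rfl fun i _ => ?_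
    congr 1
    fin_cases i <;> rfl
  obtain ⟨g, T, ⟨d0, d1, d2, d3, d4, d5, d6, d7, dT⟩, hre1⟩ :=
    Stmt10Aux.fullReduce _ _ _ _ _ _ _ _ hre0
  have hdvd : ∀ i, g ∣ n i := by
    intro i; fin_cases i <;> assumption
  have hgne : g ≠ 0 := by
    intro hg0
    subst hg0
    have hni : ∀ i, n i = 0 := fun i => zero_dvd_iff.mp (hdvd i)
    have hw0 : w = 0 := by
      rw [← hn]
      simp [hni]
    rw [hw0] at hww
    have h2 : (2 * (k:ℚ)) = 0 := by rw [← hww]; simp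
    have h3 : (k:ℚ) = 0 := by linarith
    have h4 : k = 0 := by exact_mod_cast h3
    omega
  have hgpm : g = 1 ∨ g = -1 := by
    refine hwprim (∑ i, (n i / g) • b i) ?_ g ?_
    · rw [← hbL]
      exact Submodule.sum_mem _ fun i _ =>
        Submodule.smul_mem _ _ (Submodule.subset_span ⟨i, rfl⟩)
    · rw [← hn, Finset.smul_sum]
      refine Finset.sum_congr rfl fun i _ => ?_
      rw [smul_smul, Int.mul_ediv_cancel' (hdvd i)]
  -- reach the standard vector (1, K, 0, ..., 0)
  obtain ⟨K, hreK⟩ : ∃ K : ℤ, Stmt10Aux.Reach B L w ![1, K, 0, 0, 0, 0, 0, 0] := by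
    rcases hgpm with hg1 | hg1
    · exact ⟨T, by rwa [hg1] at hre1⟩
    · refine ⟨-T, ?_⟩
      have h2 := Stmt10Aux.reach_N1 hre1
      rw [hg1] at h2
      rw [show (-(-1:ℤ)) = 1 from by norm_num] at h2
      simpa using h2
  obtain ⟨u, ⟨huL, huli, huspan, huG⟩, hwu⟩ := hreK
  have hmemL : ∀ j, u j ∈ L := fun j => huL ▸ Submodule.subset_span ⟨j, rfl⟩
  have hw1 : w = u 0 + K • u 1 := by
    rw [hwu, Fin.sum_univ_eight]
    simp
  -- representation of w as a ℚ-combination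
  have RWK : w = ∑ i, (![1, (K:ℚ), 0, 0, 0, 0, 0, 0] : Fin 8 → ℚ) i • u i := by
    rw [hw1, Fin.sum_univ_eight]
    simp only [Stmt10Aux.v8_0, Stmt10Aux.v8_1, Stmt10Aux.v8_2, Stmt10Aux.v8_3,
      Stmt10Aux.v8_4, Stmt10Aux.v8_5, Stmt10Aux.v8_6, Stmt10Aux.v8_7, Stmt10Aux.v8m_0, Stmt10Aux.v8m_1, Stmt10Aux.v8m_2, Stmt10Aux.v8m_3, Stmt10Aux.v8m_4, Stmt10Aux.v8m_5, Stmt10Aux.v8m_6, Stmt10Aux.v8m_7, Stmt10Aux.v7m_0, Stmt10Aux.v7m_1, Stmt10Aux.v7m_2, Stmt10Aux.v7m_3, Stmt10Aux.v7m_4, Stmt10Aux.v7m_5, Stmt10Aux.v7m_6,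
      ← Int.cast_smul_eq_zsmul ℚ]
    module
  -- K = k, using w² = 2k
  have hKk : K = k := by
    have hB2 : B w w = 2 * (K : ℚ) := by
      rw [RWK, Stmt10Aux.Bval huG]
      simp only [Stmt10Aux.v8_0, Stmt10Aux.v8_1, Stmt10Aux.v8_2, Stmt10Aux.v8_3,
        Stmt10Aux.v8_4, Stmt10Aux.v8_5, Stmt10Aux.v8_6, Stmt10Aux.v8_7, Stmt10Aux.v8m_0, Stmt10Aux.v8m_1, Stmt10Aux.v8m_2, Stmt10Aux.v8m_3, Stmt10Aux.v8m_4, Stmt10Aux.v8m_5, Stmt10Aux.v8m_6, Stmt10Aux.v8m_7, Stmt10Aux.v7m_0, Stmt10Aux.v7m_1, Stmt10Aux.v7m_2, Stmt10Aux.v7m_3, Stmt10Aux.v7m_4, Stmt10Aux.v7m_5, Stmt10Aux.v7m_6]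
      ring
    rw [hww] at hB2
    have : (k : ℚ) = (K : ℚ) := by linarith
    exact_mod_cast this.symm
  rw [hKk] at hw1
  clear RWK hwu
  -- coefficient matrix of the complement basis
  set CM : Fin 7 → Fin 8 → ℚ :=
    ![![0,0,1,0,0,0,0,0], ![0,0,0,1,0,0,0,0], ![0,0,0,0,1,0,0,0], ![0,0,0,0,0,1,0,0],
      ![0,0,0,0,0,0,1,0], ![0,0,0,0,0,0,0,1], ![1,-(k:ℚ),0,0,0,0,0,0]] with hCM
  have hcrep : ∀ i : Fin 7,
      (![u 2, u 3, u 4, u 5, u 6, u 7, u 0 - k • u 1] : Fin 7 → V) i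
        = ∑ p, CM i p • u p := by
    intro i
    fin_cases i <;>
      (simp only [hCM, Stmt10Aux.v7_0, Stmt10Aux.v7_1, Stmt10Aux.v7_2, Stmt10Aux.v7_3,
         Stmt10Aux.v7_4, Stmt10Aux.v7_5, Stmt10Aux.v7_6, Stmt10Aux.v7m_0, Stmt10Aux.v7m_1, Stmt10Aux.v7m_2, Stmt10Aux.v7m_3, Stmt10Aux.v7m_4, Stmt10Aux.v7m_5, Stmt10Aux.v7m_6]
       rw [Fin.sum_univ_eight]
       simp only [Stmt10Aux.v8_0, Stmt10Aux.v8_1, Stmt10Aux.v8_2, Stmt10Aux.v8_3,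
         Stmt10Aux.v8_4, Stmt10Aux.v8_5, Stmt10Aux.v8_6, Stmt10Aux.v8_7, Stmt10Aux.v8m_0, Stmt10Aux.v8m_1, Stmt10Aux.v8m_2, Stmt10Aux.v8m_3, Stmt10Aux.v8m_4, Stmt10Aux.v8m_5, Stmt10Aux.v8m_6, Stmt10Aux.v8m_7, Stmt10Aux.v7m_0, Stmt10Aux.v7m_1, Stmt10Aux.v7m_2, Stmt10Aux.v7m_3, Stmt10Aux.v7m_4, Stmt10Aux.v7m_5, Stmt10Aux.v7m_6,
         ← Int.cast_smul_eq_zsmul ℚ]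
       module)
  have RV : v = ∑ i, (![(m:ℚ), (m:ℚ)*(k:ℚ), 0, 0, 0, 0, 0, 0] : Fin 8 → ℚ) i • u i := by
    rw [hv, hw1, Fin.sum_univ_eight]
    simp only [Stmt10Aux.v8_0, Stmt10Aux.v8_1, Stmt10Aux.v8_2, Stmt10Aux.v8_3,
      Stmt10Aux.v8_4, Stmt10Aux.v8_5, Stmt10Aux.v8_6, Stmt10Aux.v8_7, Stmt10Aux.v8m_0, Stmt10Aux.v8m_1, Stmt10Aux.v8m_2, Stmt10Aux.v8m_3, Stmt10Aux.v8m_4, Stmt10Aux.v8m_5, Stmt10Aux.v8m_6, Stmt10Aux.v8m_7, Stmt10Aux.v7m_0, Stmt10Aux.v7m_1, Stmt10Aux.v7m_2, Stmt10Aux.v7m_3, Stmt10Aux.v7m_4, Stmt10Aux.v7m_5, Stmt10Aux.v7m_6,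
      ← Int.cast_smul_eq_zsmul ℚ]
    module
  have horth : ∀ i : Fin 7,
      B (![u 2, u 3, u 4, u 5, u 6, u 7, u 0 - k • u 1] i) v = 0 := by
    intro i
    rw [hcrep i, RV, Stmt10Aux.Bval huG]
    fin_cases i <;>
      (simp only [hCM, Stmt10Aux.v7_0, Stmt10Aux.v7_1, Stmt10Aux.v7_2, Stmt10Aux.v7_3,
         Stmt10Aux.v7_4, Stmt10Aux.v7_5, Stmt10Aux.v7_6, Stmt10Aux.v8_0, Stmt10Aux.v8_1,
         Stmt10Aux.v8_2, Stmt10Aux.v8_3, Stmt10Aux.v8_4, Stmt10Aux.v8_5, Stmt10Aux.v8_6,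
         Stmt10Aux.v8_7, Stmt10Aux.v8m_0, Stmt10Aux.v8m_1, Stmt10Aux.v8m_2, Stmt10Aux.v8m_3, Stmt10Aux.v8m_4, Stmt10Aux.v8m_5, Stmt10Aux.v8m_6, Stmt10Aux.v8m_7, Stmt10Aux.v7m_0, Stmt10Aux.v7m_1, Stmt10Aux.v7m_2, Stmt10Aux.v7m_3, Stmt10Aux.v7m_4, Stmt10Aux.v7m_5, Stmt10Aux.v7m_6]
       ring)
  have hmemc : ∀ i : Fin 7,
      (![u 2, u 3, u 4, u 5, u 6, u 7, u 0 - k • u 1] : Fin 7 → V) i ∈ L := by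
    intro i
    fin_cases i
    · exact hmemL 2
    · exact hmemL 3
    · exact hmemL 4
    · exact hmemL 5
    · exact hmemL 6
    · exact hmemL 7
    · exact Submodule.sub_mem _ (hmemL 0) (Submodule.smul_mem _ _ (hmemL 1))
  refine ⟨![u 2, u 3, u 4, u 5, u 6, u 7, u 0 - k • u 1], fun i => ⟨hmemc i, horth i⟩,
    ?_, ?_, ?_⟩
  · -- linear independence
    rw [Fintype.linearIndependent_iff]
    intro gg hsum
    have h8 : ∑ j, (![gg 6, -(k:ℚ) * gg 6, gg 0, gg 1, gg 2, gg 3, gg 4, gg 5]) j • u j = 0 := by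
      rw [Fin.sum_univ_eight]
      rw [Fin.sum_univ_seven] at hsum
      simp only [Stmt10Aux.v8_0, Stmt10Aux.v8_1, Stmt10Aux.v8_2, Stmt10Aux.v8_3,
        Stmt10Aux.v8_4, Stmt10Aux.v8_5, Stmt10Aux.v8_6, Stmt10Aux.v8_7, Stmt10Aux.v8m_0, Stmt10Aux.v8m_1, Stmt10Aux.v8m_2, Stmt10Aux.v8m_3, Stmt10Aux.v8m_4, Stmt10Aux.v8m_5, Stmt10Aux.v8m_6, Stmt10Aux.v8m_7, Stmt10Aux.v7m_0, Stmt10Aux.v7m_1, Stmt10Aux.v7m_2, Stmt10Aux.v7m_3, Stmt10Aux.v7m_4, Stmt10Aux.v7m_5, Stmt10Aux.v7m_6,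
        Stmt10Aux.v7_0, Stmt10Aux.v7_1, Stmt10Aux.v7_2, Stmt10Aux.v7_3, Stmt10Aux.v7_4,
        Stmt10Aux.v7_5, Stmt10Aux.v7_6, Stmt10Aux.v8m_0, Stmt10Aux.v8m_1, Stmt10Aux.v8m_2, Stmt10Aux.v8m_3, Stmt10Aux.v8m_4, Stmt10Aux.v8m_5, Stmt10Aux.v8m_6, Stmt10Aux.v8m_7, Stmt10Aux.v7m_0, Stmt10Aux.v7m_1, Stmt10Aux.v7m_2, Stmt10Aux.v7m_3, Stmt10Aux.v7m_4, Stmt10Aux.v7m_5, Stmt10Aux.v7m_6] at hsum ⊢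
      rw [← hsum]
      simp only [← Int.cast_smul_eq_zsmul ℚ]
      module
    have hall := Fintype.linearIndependent_iff.mp huli _ h8
    intro i
    fin_cases i
    · simpa using hall 2
    · simpa using hall 3
    · simpa using hall 4
    · simpa using hall 5
    · simpa using hall 6
    · simpa using hall 7
    · simpa using hall 0
  · -- span equality
    apply le_antisymm
    · rw [Submodule.span_le]
      rintro x ⟨i, rfl⟩
      refine Submodule.mem_inf.mpr ⟨hmemc i, ?_⟩
      rw [Submodule.restrictScalars_mem, LinearMap.mem_ker, LinearMap.flip_apply]
      exact horth i
    · intro x hx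
      obtain ⟨hxL, hxK⟩ := Submodule.mem_inf.mp hx
      have hxv : B x v = 0 := by
        rw [Submodule.restrictScalars_mem, LinearMap.mem_ker, LinearMap.flip_apply] at hxK
        exact hxK
      rw [← huL] at hxL
      obtain ⟨f, hf⟩ := (Submodule.mem_span_range_iff_exists_fun ℤ).mp hxL
      have hxrep : x = ∑ i, ((fun i => (f i : ℚ)) : Fin 8 → ℚ) i • u i := by
        rw [← hf]
        refine Finset.sum_congr rfl fun i _ => ?_
        rw [Int.cast_smul_eq_zsmul ℚ]
      have hBx : B x v = (m : ℚ) * ((k:ℚ) * (f 0 : ℚ) + (f 1 : ℚ)) := by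
        rw [hxrep, RV, Stmt10Aux.Bval huG]
        simp only [Stmt10Aux.v8_0, Stmt10Aux.v8_1, Stmt10Aux.v8_2, Stmt10Aux.v8_3,
          Stmt10Aux.v8_4, Stmt10Aux.v8_5, Stmt10Aux.v8_6, Stmt10Aux.v8_7, Stmt10Aux.v8m_0, Stmt10Aux.v8m_1, Stmt10Aux.v8m_2, Stmt10Aux.v8m_3, Stmt10Aux.v8m_4, Stmt10Aux.v8m_5, Stmt10Aux.v8m_6, Stmt10Aux.v8m_7, Stmt10Aux.v7m_0, Stmt10Aux.v7m_1, Stmt10Aux.v7m_2, Stmt10Aux.v7m_3, Stmt10Aux.v7m_4, Stmt10Aux.v7m_5, Stmt10Aux.v7m_6]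
        ring
      have hf1 : f 1 = -(k * f 0) := by
        rw [hxv] at hBx
        have hm0 : (m:ℚ) ≠ 0 := by
          have : m ≠ 0 := by omega
          exact_mod_cast this
        have h0 : (k:ℚ) * (f 0 : ℚ) + (f 1 : ℚ) = 0 := by
          rcases mul_eq_zero.mp hBx.symm with h | h
          · exact absurd h hm0
          · exact h
        have h0' : ((k * f 0 + f 1 : ℤ) : ℚ) = 0 := by push_cast; linarith
        have h0'' : k * f 0 + f 1 = 0 := by exact_mod_cast h0'
        omega
      have hxw : x = f 0 • (u 0 - k • u 1) + (f 2 • u 2 + f 3 • u 3 + f 4 • u 4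
          + f 5 • u 5 + f 6 • u 6 + f 7 • u 7) := by
        rw [← hf, Fin.sum_univ_eight, hf1]
        simp only [← Int.cast_smul_eq_zsmul ℚ]
        push_cast
        module
      rw [hxw]
      refine Submodule.add_mem _
        (Submodule.smul_mem _ _ (Submodule.subset_span ⟨6, rfl⟩)) ?_
      refine Submodule.add_mem _ (Submodule.add_mem _ (Submodule.add_mem _ (Submodule.add_mem _
        (Submodule.add_mem _
          (Submodule.smul_mem _ _ (Submodule.subset_span ⟨0, rfl⟩))
          (Submodule.smul_mem _ _ (Submodule.subset_span ⟨1, rfl⟩)))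
        (Submodule.smul_mem _ _ (Submodule.subset_span ⟨2, rfl⟩)))
        (Submodule.smul_mem _ _ (Submodule.subset_span ⟨3, rfl⟩)))
        (Submodule.smul_mem _ _ (Submodule.subset_span ⟨4, rfl⟩)))
        (Submodule.smul_mem _ _ (Submodule.subset_span ⟨5, rfl⟩))
  · -- Gram matrix
    intro i j
    rw [hcrep i, hcrep j, Stmt10Aux.Bval huG]
    fin_cases i <;> fin_cases j <;>
      (simp only [hCM, Stmt10Aux.v7_0, Stmt10Aux.v7_1, Stmt10Aux.v7_2, Stmt10Aux.v7_3, Stmt10Aux.v7_4, Stmt10Aux.v7_5, Stmt10Aux.v7_6, Stmt10Aux.v7m_0, Stmt10Aux.v7m_1, Stmt10Aux.v7m_2, Stmt10Aux.v7m_3, Stmt10Aux.v7m_4, Stmt10Aux.v7m_5, Stmt10Aux.v7m_6, Stmt10Aux.v8_0, Stmt10Aux.v8_1, Stmt10Aux.v8_2, Stmt10Aux.v8_3, Stmt10Aux.v8_4, Stmt10Aux.v8_5, Stmt10Aux.v8_6, Stmt10Aux.v8_7, Stmt10Aux.v8m_0, Stmt10Aux.v8m_1, Stmt10Aux.v8m_2,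 Stmt10Aux.v8m_3, Stmt10Aux.v8m_4, Stmt10Aux.v8m_5, Stmt10Aux.v8m_6, Stmt10Aux.v8m_7, Stmt10Aux.gN_0_0, Stmt10Aux.gN_0_1, Stmt10Aux.gN_0_2, Stmt10Aux.gN_0_3, Stmt10Aux.gN_0_4, Stmt10Aux.gN_0_5, Stmt10Aux.gN_0_6, Stmt10Aux.gN_1_0, Stmt10Aux.gN_1_1, Stmt10Aux.gN_1_2, Stmt10Aux.gN_1_3, Stmt10Aux.gN_1_4, Stmt10Aux.gN_1_5, Stmt10Aux.gN_1_6, Stmt10Aux.gN_2_0, Stmt10Aux.gN_2_1, Stmt10Aux.gN_2_2, Stmt10Aux.gN_2_3, Stmt10Aux.gN_2_4, Stmt10Aux.gN_2_5, Stmt10Aux.gN_2_6, Stmt10Aux.gN_3_0, Stmt10Aux.gN_3_1, Stmt10Aux.gN_3_2, Stmt10Aux.gN_3_3, Stmt10Aux.gN_3_4, Stmt10Aux.gN_3_5, Stmt10Aux.gN_3_6, Stmt10Aux.gN_4_0, Stmt10Aux.gN_4_1, Stmt10Aux.gN_4_2, Stmt10Aux.gN_4_3, Stmt10Aux.gN_4_4,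 Stmt10Aux.gN_4_5, Stmt10Aux.gN_4_6, Stmt10Aux.gN_5_0, Stmt10Aux.gN_5_1, Stmt10Aux.gN_5_2, Stmt10Aux.gN_5_3, Stmt10Aux.gN_5_4, Stmt10Aux.gN_5_5, Stmt10Aux.gN_5_6, Stmt10Aux.gN_6_0, Stmt10Aux.gN_6_1, Stmt10Aux.gN_6_2, Stmt10Aux.gN_6_3, Stmt10Aux.gN_6_4, Stmt10Aux.gN_6_5, Stmt10Aux.gN_6_6, Stmt10Aux.gNm_0_0, Stmt10Aux.gNm_0_1, Stmt10Aux.gNm_0_2, Stmt10Aux.gNm_0_3, Stmt10Aux.gNm_0_4, Stmt10Aux.gNm_0_5, Stmt10Aux.gNm_0_6, Stmt10Aux.gNm_1_0, Stmt10Aux.gNm_1_1, Stmt10Aux.gNm_1_2, Stmt10Aux.gNm_1_3, Stmt10Aux.gNm_1_4, Stmt10Aux.gNm_1_5, Stmt10Aux.gNm_1_6, Stmt10Aux.gNm_2_0, Stmt10Aux.gNm_2_1, Stmt10Aux.gNm_2_2, Stmt10Aux.gNm_2_3, Stmt10Aux.gNm_2_4, Stmt10Aux.gNm_2_5, Stmt10Aux.gNm_2_6,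 Stmt10Aux.gNm_3_0, Stmt10Aux.gNm_3_1, Stmt10Aux.gNm_3_2, Stmt10Aux.gNm_3_3, Stmt10Aux.gNm_3_4, Stmt10Aux.gNm_3_5, Stmt10Aux.gNm_3_6, Stmt10Aux.gNm_4_0, Stmt10Aux.gNm_4_1, Stmt10Aux.gNm_4_2, Stmt10Aux.gNm_4_3, Stmt10Aux.gNm_4_4, Stmt10Aux.gNm_4_5, Stmt10Aux.gNm_4_6, Stmt10Aux.gNm_5_0, Stmt10Aux.gNm_5_1, Stmt10Aux.gNm_5_2, Stmt10Aux.gNm_5_3, Stmt10Aux.gNm_5_4, Stmt10Aux.gNm_5_5, Stmt10Aux.gNm_5_6, Stmt10Aux.gNm_6_0, Stmt10Aux.gNm_6_1, Stmt10Aux.gNm_6_2, Stmt10Aux.gNm_6_3, Stmt10Aux.gNm_6_4, Stmt10Aux.gNm_6_5, Stmt10Aux.gNm_6_6]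
       ring)
end

section
/- Let Λ be an even lattice of signature (p,q) with p > 1, and let Λ' ⊆ Λ be a nondegenerate sublattice of signature (p',q') with 1 ≤ p' and such that the induced embedding O(Λ') ↪ O(Λ) (extending isometries by the identity on (Λ')^⊥) is defined. Then an isometry g ∈ O(Λ') is orientation-preserving on Λ' if and only if its extension g ⊕ id is orientation-preserving on Λ; i.e., the orientation character of Λ restricts to the orientation character of Λ'. -/
section Defs

variable {V : Type*} [AddCommGroup V] [Module ℚ V]

/-- `w` is a basis of a maximal positive-definite subspace of `W ≤ V` for the form `B`. -/
def IsMaxPos (B : V → V → ℚ) (W : Submodule ℚ V) {p : ℕ} (w : Fin p → V) : Prop :=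
  (∀ i, w i ∈ W) ∧ LinearIndependent ℚ w ∧
    (∀ v ∈ Submodule.span ℚ (Set.range w), v ≠ 0 → 0 < B v v) ∧
    ∀ (q : ℕ) (u : Fin q → V), (∀ i, u i ∈ W) → LinearIndependent ℚ u →
      (∀ v ∈ Submodule.span ℚ (Set.range u), v ≠ 0 → 0 < B v v) → q ≤ p

/-- `g` preserves the orientation of (the positive cone of) the quadratic space `(W, B)`:
for every basis `w` of a maximal positive-definite subspace of `W`, the pairing matrix
`(B (w i) (g (w j)))` has positive determinant. -/
def OriPres (B : V → V → ℚ) (W : Submodule ℚ V) (g : V → V) : Prop :=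
  ∀ (p : ℕ) (w : Fin p → V), IsMaxPos B W w →
    0 < (Matrix.of fun i j => B (w i) (g (w j))).det


end Defs

section Aux
open Matrix

private lemma dot_self_nonneg' {n : Type*} [Fintype n] (a : n → ℝ) : 0 ≤ a ⬝ᵥ a :=
  Finset.sum_nonneg fun i _ => mul_self_nonneg _

private lemma dot_self_pos' {n : Type*} [Fintype n] {a : n → ℝ} (ha : a ≠ 0) : 0 < a ⬝ᵥ a :=
  lt_of_le_of_ne (dot_self_nonneg' a) (fun h => ha (dotProduct_self_eq_zero.mp h.symm))

private lemma dot_cs' {n : Type*} [Fintype n] (a b : n → ℝ) :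
    (a ⬝ᵥ b)^2 ≤ (a ⬝ᵥ a) * (b ⬝ᵥ b) := by
  simpa [dotProduct, pow_two] using
    Finset.sum_mul_sq_le_sq_mul_sq Finset.univ a b

private lemma det_one_sub_pos' {m n : Type*} [Fintype m] [Fintype n] [DecidableEq n]
    (X Y : Matrix m n ℝ)
    (hX : ∀ x : n → ℝ, x ≠ 0 → (X *ᵥ x) ⬝ᵥ (X *ᵥ x) < x ⬝ᵥ x)
    (hY : ∀ x : n → ℝ, x ≠ 0 → (Y *ᵥ x) ⬝ᵥ (Y *ᵥ x) < x ⬝ᵥ x) :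
    0 < ((1 : Matrix n n ℝ) - Xᵀ * Y).det := by
  have key : ∀ t ∈ Set.Icc (0:ℝ) 1, ((1 : Matrix n n ℝ) - t • (Xᵀ * Y)).det ≠ 0 := by
    intro t ht h0
    obtain ⟨x, hx0, hxv⟩ := Matrix.exists_mulVec_eq_zero_iff.mpr h0
    have h1 : x = t • ((Xᵀ * Y) *ᵥ x) := by
      have := hxv
      rw [Matrix.sub_mulVec, Matrix.one_mulVec, Matrix.smul_mulVec, sub_eq_zero] at this
      exact this
    have hxx : x ⬝ᵥ x = t * ((X *ᵥ x) ⬝ᵥ (Y *ᵥ x)) := by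
      nth_rewrite 2 [h1]
      rw [dotProduct_smul, smul_eq_mul, ← Matrix.mulVec_mulVec,
        Matrix.dotProduct_mulVec, Matrix.vecMul_transpose]
    have hs : 0 < x ⬝ᵥ x := dot_self_pos' hx0
    have haa := hX x hx0
    have hbb := hY x hx0
    have hcs := dot_cs' (X *ᵥ x) (Y *ᵥ x)
    have h2 := dot_self_nonneg' (X *ᵥ x)
    have h3 := dot_self_nonneg' (Y *ᵥ x)
    nlinarith [ht.1, ht.2, sq_nonneg ((X *ᵥ x) ⬝ᵥ (Y *ᵥ x)), mul_le_one₀ ht.2 ht.1 ht.2]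
  have hcont : Continuous fun t : ℝ => ((1 : Matrix n n ℝ) - t • (Xᵀ * Y)).det := by
    apply Continuous.matrix_det
    fun_prop
  by_contra hle
  push_neg at hle
  have hne := key 1 ⟨zero_le_one, le_refl 1⟩
  rw [one_smul] at hne
  have h1lt : ((1 : Matrix n n ℝ) - (1:ℝ) • (Xᵀ * Y)).det < 0 := by
    rw [one_smul]; exact lt_of_le_of_ne hle hne
  have h0eq : ((1 : Matrix n n ℝ) - (0:ℝ) • (Xᵀ * Y)).det = 1 := by simp
  have := intermediate_value_Icc' (zero_le_one) hcont.continuousOn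
  have h0mem : (0:ℝ) ∈ Set.Icc (((1 : Matrix n n ℝ) - (1:ℝ) • (Xᵀ * Y)).det)
      (((1 : Matrix n n ℝ) - (0:ℝ) • (Xᵀ * Y)).det) := ⟨h1lt.le, by rw [h0eq]; exact zero_le_one⟩
  obtain ⟨t, htmem, ht0⟩ := this h0mem
  exact key t htmem ht0

private lemma posdef_cast' {p : ℕ} (M : Matrix (Fin p) (Fin p) ℚ) (hs : Mᵀ = M)
    (h : ∀ x : Fin p → ℚ, x ≠ 0 → 0 < x ⬝ᵥ (M *ᵥ x)) :
    ∀ x : Fin p → ℝ, x ≠ 0 → 0 < x ⬝ᵥ ((M.map ((↑) : ℚ → ℝ)) *ᵥ x) := by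
  set N := M.map ((↑) : ℚ → ℝ) with hN
  have hNs : Nᵀ = N := by
    rw [hN, ← Matrix.transpose_map, hs]
  have hcast : ∀ y : Fin p → ℚ,
      ((fun i => (y i : ℝ)) ⬝ᵥ (N *ᵥ fun i => (y i : ℝ))) = ((y ⬝ᵥ (M *ᵥ y) : ℚ) : ℝ) := by
    intro y
    simp only [dotProduct, Matrix.mulVec, Matrix.map_apply, hN]
    push_cast
    rfl
  have hdr : DenseRange (fun y : Fin p → ℚ => fun i => (y i : ℝ)) := by
    have hd : Dense (Set.pi Set.univ fun _ : Fin p => Set.range ((↑) : ℚ → ℝ)) :=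
      dense_pi Set.univ (fun i _ => Rat.denseRange_cast)
    refine hd.mono ?_
    rintro x hx
    choose y hy using fun i => hx i (Set.mem_univ i)
    exact ⟨y, funext hy⟩
  have hq : Continuous fun x : Fin p → ℝ => x ⬝ᵥ (N *ᵥ x) := by
    have : Continuous fun x : Fin p → ℝ => ∑ i, x i * ∑ j, N i j * x j := by
      apply continuous_finset_sum
      intro i _
      exact (continuous_apply i).mul
        (continuous_finset_sum _ fun j _ => continuous_const.mul (continuous_apply j))
    simpa [dotProduct, Matrix.mulVec] using this
  have hsemi : ∀ x : Fin p → ℝ, 0 ≤ x ⬝ᵥ (N *ᵥ x) := by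
    have hcl : IsClosed {x : Fin p → ℝ | 0 ≤ x ⬝ᵥ (N *ᵥ x)} := isClosed_le continuous_const hq
    have hsub : Set.range (fun y : Fin p → ℚ => fun i => (y i : ℝ)) ⊆
        {x : Fin p → ℝ | 0 ≤ x ⬝ᵥ (N *ᵥ x)} := by
      rintro _ ⟨y, rfl⟩
      simp only [Set.mem_setOf_eq, hcast y]
      rcases eq_or_ne y 0 with rfl | hy
      · simp
      · exact_mod_cast (h y hy).le
    intro x
    exact closure_minimal hsub hcl (hdr x)
  have hPSD : N.PosSemidef := by
    refine Matrix.PosSemidef.of_dotProduct_mulVec_nonneg ?_ ?_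
    · rw [Matrix.IsHermitian]
      simpa using hNs
    · intro x
      simpa using hsemi x
  have hdet : M.det ≠ 0 := by
    intro h0
    obtain ⟨y, hy0, hMy⟩ := Matrix.exists_mulVec_eq_zero_iff.mpr h0
    have := h y hy0
    rw [hMy] at this
    simp at this
  intro x hx0
  rcases lt_or_eq_of_le (hsemi x) with hlt | heq
  · exact hlt
  · exfalso
    have hx' : N *ᵥ x = 0 := by
      have := (hPSD.dotProduct_mulVec_zero_iff x).mp ?_
      · exact this
      · simpa using heq.symm
    have : N.det = 0 := Matrix.exists_mulVec_eq_zero_iff.mp ⟨x, hx0, hx'⟩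
    have hc := RingHom.map_det (Rat.castHom ℝ) M
    rw [RingHom.mapMatrix_apply] at hc
    rw [hN] at this
    apply hdet
    have : ((M.det : ℚ) : ℝ) = 0 := by
      rw [show ((M.det:ℚ):ℝ) = (Rat.castHom ℝ) M.det from rfl, hc]
      convert this using 2
      rfl
    exact_mod_cast this

variable {V : Type*} [AddCommGroup V] [Module ℚ V]

private lemma expand2 (B : V →ₗ[ℚ] V →ₗ[ℚ] ℚ) {ι κ : Type*} [Fintype ι] [Fintype κ]
    (t : ι → V) (s : κ → V) (x : ι → ℚ) (y : κ → ℚ) :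
    B (∑ i, x i • t i) (∑ j, y j • s j) = ∑ i, ∑ j, x i * y j * B (t i) (s j) := by
  simp only [map_sum, _root_.map_smul, LinearMap.sum_apply, LinearMap.smul_apply, smul_eq_mul,
    Finset.mul_sum, Finset.sum_mul]
  rw [Finset.sum_comm]
  exact Finset.sum_congr rfl fun j _ => Finset.sum_congr rfl fun i _ => by ring

private noncomputable def Amat {V : Type*} {ι : Type*} [Fintype ι] (d : ι → ℚ) (c : V → ι → ℚ)
    {p : ℕ} (u : Fin p → V) : Matrix {k : ι // 0 < d k} (Fin p) ℝ :=
  Matrix.of fun k j => Real.sqrt ((d k.1 : ℝ)) * (c (u j) k.1 : ℝ)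

private noncomputable def Nmat {V : Type*} {ι : Type*} [Fintype ι] (d : ι → ℚ) (c : V → ι → ℚ)
    {p : ℕ} (u : Fin p → V) : Matrix {k : ι // ¬ 0 < d k} (Fin p) ℝ :=
  Matrix.of fun k j => Real.sqrt (-(d k.1 : ℝ)) * (c (u j) k.1 : ℝ)

private theorem master (B : V →ₗ[ℚ] V →ₗ[ℚ] ℚ) (hsymm : ∀ v w, B v w = B w v)
    (W : Submodule ℚ V) {ι : Type*} [Fintype ι] [DecidableEq ι] (f : ι → V)
    (hmem : ∀ k, f k ∈ W) (hli : LinearIndependent ℚ f)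
    (hspan : W ≤ Submodule.span ℚ (Set.range f))
    (hortho : ∀ k l, k ≠ l → B (f k) (f l) = 0)
    (hd : ∀ k, B (f k) (f k) ≠ 0) :
    (∀ (p : ℕ) (u : Fin p → V), (∀ i, u i ∈ W) → LinearIndependent ℚ u →
        (∀ v ∈ Submodule.span ℚ (Set.range u), v ≠ 0 → 0 < B v v) →
        p ≤ Fintype.card {k : ι // 0 < B (f k) (f k)}) ∧
    (∃ w : Fin (Fintype.card {k : ι // 0 < B (f k) (f k)}) → V,
        IsMaxPos (fun v w => B v w) W w) ∧
    ∃ ε : (Fin (Fintype.card {k : ι // 0 < B (f k) (f k)}) → V) → ℝ,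
      ∀ u v, IsMaxPos (fun v w => B v w) W u → IsMaxPos (fun v w => B v w) W v →
        0 < ε u * ε v * (((Matrix.of fun i j => B (u i) (v j)).det : ℚ) : ℝ) := by
  classical
  -- coordinates
  have hrep : ∀ x : V, ∃ c : ι → ℚ, x ∈ W → ∑ k, c k • f k = x := by
    intro x
    by_cases hx : x ∈ W
    · obtain ⟨c, hc⟩ := (Submodule.mem_span_range_iff_exists_fun ℚ).mp (hspan hx)
      exact ⟨c, fun _ => hc⟩
    · exact ⟨0, fun h => absurd h hx⟩
  choose crep hcrep using hrep
  set d : ι → ℚ := fun k => B (f k) (f k) with hdDef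
  have hBform : ∀ x y, x ∈ W → y ∈ W → B x y = ∑ k, d k * crep x k * crep y k := by
    intro x y hx hy
    conv_lhs => rw [← hcrep x hx, ← hcrep y hy]
    rw [expand2]
    refine Finset.sum_congr rfl fun k _ => ?_
    rw [Finset.sum_eq_single k]
    · simp only [hdDef]; ring
    · intro l _ hlk
      rw [hortho k l (Ne.symm hlk), mul_zero]
    · intro h; exact absurd (Finset.mem_univ k) h
  -- rational Gram positivity
  have hGramSymm : ∀ {p : ℕ} (u : Fin p → V),
      (Matrix.of fun i j => B (u i) (u j))ᵀ = (Matrix.of fun i j => B (u i) (u j)) := by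
    intro p u; ext i j; simp [Matrix.transpose_apply, hsymm]
  have hGram : ∀ {p : ℕ} (u : Fin p → V), LinearIndependent ℚ u →
      (∀ v ∈ Submodule.span ℚ (Set.range u), v ≠ 0 → 0 < B v v) →
      ∀ x : Fin p → ℚ, x ≠ 0 → 0 < x ⬝ᵥ ((Matrix.of fun i j => B (u i) (u j)) *ᵥ x) := by
    intro p u hliu hpos x hx
    have hv : (∑ i, x i • u i) ∈ Submodule.span ℚ (Set.range u) :=
      Submodule.sum_mem _ fun i _ =>
        Submodule.smul_mem _ _ (Submodule.subset_span ⟨i, rfl⟩)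
    have hvne : (∑ i, x i • u i) ≠ 0 := by
      intro h0
      exact hx (funext (Fintype.linearIndependent_iff.mp hliu x h0))
    have hp := hpos _ hv hvne
    have he : B (∑ i, x i • u i) (∑ j, x j • u j) =
        x ⬝ᵥ ((Matrix.of fun i j => B (u i) (u j)) *ᵥ x) := by
      rw [expand2]
      simp only [dotProduct, Matrix.mulVec, Matrix.of_apply, Finset.mul_sum]
      exact Finset.sum_congr rfl fun i _ => Finset.sum_congr rfl fun j _ => by ring
    rw [← he]; exact hp
  -- real Gram identity
  have hMreal : ∀ {p q : ℕ} (u : Fin p → V) (v : Fin q → V),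
      (∀ i, u i ∈ W) → (∀ i, v i ∈ W) →
      ((Matrix.of fun i j => B (u i) (v j)).map ((↑) : ℚ → ℝ)) =
        (Amat d crep u)ᵀ * (Amat d crep v) - (Nmat d crep u)ᵀ * (Nmat d crep v) := by
    intro p q u v hu hv
    ext i j
    have hL : ((Matrix.of fun i j => B (u i) (v j)).map ((↑) : ℚ → ℝ)) i j
        = ((B (u i) (v j) : ℚ) : ℝ) := rfl
    rw [hL, hBform (u i) (v j) (hu i) (hv j)]
    push_cast
    have hsplit : ∑ k : ι, ((d k : ℝ)) * (crep (u i) k : ℝ) * (crep (v j) k : ℝ) =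
        (∑ k : {k : ι // 0 < d k}, (d k.1 : ℝ) * (crep (u i) k.1 : ℝ) * (crep (v j) k.1 : ℝ)) +
        ∑ k : {k : ι // ¬ 0 < d k}, (d k.1 : ℝ) * (crep (u i) k.1 : ℝ) * (crep (v j) k.1 : ℝ) := by
      rw [← Finset.sum_filter_add_sum_filter_not Finset.univ (fun k => 0 < d k)]
      congr 1
      · exact Finset.sum_subtype _ (by simp) _
      · exact Finset.sum_subtype _ (by simp) _
    rw [hsplit]
    have hSsum : ∑ k : {k : ι // 0 < d k},
          (d k.1 : ℝ) * (crep (u i) k.1 : ℝ) * (crep (v j) k.1 : ℝ)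
        = ((Amat d crep u)ᵀ * (Amat d crep v)) i j := by
      rw [Matrix.mul_apply]
      refine Finset.sum_congr rfl fun k _ => ?_
      have h := Real.mul_self_sqrt (show (0:ℝ) ≤ (d k.1 : ℝ) by exact_mod_cast (le_of_lt k.2))
      simp only [Amat, Matrix.transpose_apply, Matrix.of_apply]
      linear_combination (-((crep (u i) k.1 : ℝ) * (crep (v j) k.1 : ℝ))) * h
    have hTsum : ∑ k : {k : ι // ¬ 0 < d k},
          (d k.1 : ℝ) * (crep (u i) k.1 : ℝ) * (crep (v j) k.1 : ℝ)
        = -(((Nmat d crep u)ᵀ * (Nmat d crep v)) i j) := by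
      rw [Matrix.mul_apply, ← Finset.sum_neg_distrib]
      refine Finset.sum_congr rfl fun k _ => ?_
      have hk : (d k.1 : ℝ) ≤ 0 := by
        exact_mod_cast le_of_lt (lt_of_le_of_ne (not_lt.mp k.2) (hd k.1))
      have h := Real.mul_self_sqrt (show (0:ℝ) ≤ -(d k.1 : ℝ) by linarith)
      simp only [Nmat, Matrix.transpose_apply, Matrix.of_apply]
      linear_combination ((crep (u i) k.1 : ℝ) * (crep (v j) k.1 : ℝ)) * h
    rw [hSsum, hTsum, Matrix.sub_apply]
    ring
  -- real injectivity of Amat columns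
  have hAinj : ∀ {p : ℕ} (u : Fin p → V), (∀ i, u i ∈ W) → LinearIndependent ℚ u →
      (∀ v ∈ Submodule.span ℚ (Set.range u), v ≠ 0 → 0 < B v v) →
      ∀ x : Fin p → ℝ, (Amat d crep u) *ᵥ x = 0 → x = 0 := by
    intro p u hmemu hliu hpos x hx
    by_contra hx0
    have hR := posdef_cast' _ (hGramSymm u) (hGram u hliu hpos) x hx0
    rw [hMreal u u hmemu hmemu, Matrix.sub_mulVec, dotProduct_sub] at hR
    have h1 : x ⬝ᵥ (((Amat d crep u)ᵀ * (Amat d crep u)) *ᵥ x)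
        = ((Amat d crep u) *ᵥ x) ⬝ᵥ ((Amat d crep u) *ᵥ x) := by
      rw [← Matrix.mulVec_mulVec, Matrix.dotProduct_mulVec, Matrix.vecMul_transpose]
    have h2 : x ⬝ᵥ (((Nmat d crep u)ᵀ * (Nmat d crep u)) *ᵥ x)
        = ((Nmat d crep u) *ᵥ x) ⬝ᵥ ((Nmat d crep u) *ᵥ x) := by
      rw [← Matrix.mulVec_mulVec, Matrix.dotProduct_mulVec, Matrix.vecMul_transpose]
    rw [h1, h2, hx] at hR
    have hnn := dot_self_nonneg' ((Nmat d crep u) *ᵥ x)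
    simp only [zero_dotProduct, zero_sub] at hR
    linarith
  have hcard : ∀ (p : ℕ) (u : Fin p → V), (∀ i, u i ∈ W) → LinearIndependent ℚ u →
      (∀ v ∈ Submodule.span ℚ (Set.range u), v ≠ 0 → 0 < B v v) →
      p ≤ Fintype.card {k : ι // 0 < d k} := by
    intro p u hmemu hliu hpos
    have hcols : LinearIndependent ℝ
        (fun j : Fin p => fun k : {k : ι // 0 < d k} => Amat d crep u k j) := by
      rw [Fintype.linearIndependent_iff]
      intro g hg j
      have hmv : (Amat d crep u) *ᵥ g = 0 := by
        funext k
        have := congrFun hg k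
        simpa [Matrix.mulVec, dotProduct, mul_comm] using this
      exact congrFun (hAinj u hmemu hliu hpos g hmv) j
    have := hcols.fintype_card_le_finrank
    simpa [Module.finrank_pi] using this
  -- the maximal positive witness
  set r := Fintype.card {k : ι // 0 < d k} with hrdef
  have eS : {k : ι // 0 < d k} ≃ Fin r := Fintype.equivFin _
  set w₀ : Fin r → V := fun i => f (eS.symm i).1 with hw₀
  have hw₀mem : ∀ i, w₀ i ∈ W := fun i => hmem _
  have hw₀li : LinearIndependent ℚ w₀ :=
    hli.comp _ (Subtype.val_injective.comp eS.symm.injective)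
  have hw₀pos : ∀ v ∈ Submodule.span ℚ (Set.range w₀), v ≠ 0 → 0 < B v v := by
    intro v hv hvne
    obtain ⟨y, hy⟩ := (Submodule.mem_span_range_iff_exists_fun ℚ).mp hv
    have hyne : y ≠ 0 := by
      rintro rfl
      apply hvne
      rw [← hy]
      simp
    rw [← hy, expand2]
    have hcol : ∀ i : Fin r, (∑ j, y i * y j * B (w₀ i) (w₀ j)) = y i * y i * d (eS.symm i).1 := by
      intro i
      rw [Finset.sum_eq_single i (fun b _ hbi => by
          have hne : (eS.symm i).1 ≠ (eS.symm b).1 :=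
            fun h => hbi (eS.symm.injective (Subtype.val_injective h)).symm
          simp only [hw₀]
          rw [show B (f (eS.symm i).1) (f (eS.symm b).1) = 0 from hortho _ _ hne, mul_zero])
        (fun h => absurd (Finset.mem_univ i) h)]
    rw [Finset.sum_congr rfl (fun i _ => hcol i)]
    apply Finset.sum_pos'
    · intro i _
      have hdi : 0 < d (eS.symm i).1 := (eS.symm i).2
      nlinarith [mul_self_nonneg (y i)]
    · obtain ⟨i, hi⟩ : ∃ i, y i ≠ 0 := by
        by_contra h; push_neg at h; exact hyne (funext h)
      refine ⟨i, Finset.mem_univ i, ?_⟩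
      have hdi : 0 < d (eS.symm i).1 := (eS.symm i).2
      exact mul_pos (mul_self_pos.mpr hi) hdi
  have hw₀max : IsMaxPos (fun a b => B a b) W w₀ :=
    ⟨hw₀mem, hw₀li, hw₀pos, fun q u hm hl hp => hcard q u hm hl hp⟩
  -- ε and the sign relation
  set A' : (Fin r → V) → Matrix (Fin r) (Fin r) ℝ :=
    fun u => Matrix.of fun i j => Amat d crep u (eS.symm i) j with hA'def
  have hA'mulVec : ∀ (u : Fin r → V) (x : Fin r → ℝ) (k : {k : ι // 0 < d k}),
      ((A' u) *ᵥ x) (eS k) = ((Amat d crep u) *ᵥ x) k := by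
    intro u x k
    simp [hA'def, Matrix.mulVec, dotProduct, eS.symm_apply_apply]
  have hA'det : ∀ (u : Fin r → V), (∀ i, u i ∈ W) → LinearIndependent ℚ u →
      (∀ v ∈ Submodule.span ℚ (Set.range u), v ≠ 0 → 0 < B v v) → (A' u).det ≠ 0 := by
    intro u h1 h2 h3 h0
    obtain ⟨x, hx0, hxv⟩ := Matrix.exists_mulVec_eq_zero_iff.mpr h0
    apply hx0
    apply hAinj u h1 h2 h3
    funext k
    rw [← hA'mulVec u x k, hxv]
    rfl
  have hAA : ∀ (u v : Fin r → V),
      (Amat d crep u)ᵀ * (Amat d crep v) = (A' u)ᵀ * (A' v) := by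
    intro u v
    ext i j
    rw [Matrix.mul_apply, Matrix.mul_apply,
      ← Equiv.sum_comp eS.symm (fun k => (Amat d crep u)ᵀ i k * (Amat d crep v) k j)]
    simp [hA'def]
  have hcontr : ∀ (w : Fin r → V), IsMaxPos (fun a b => B a b) W w →
      ∀ x : Fin r → ℝ, x ≠ 0 →
      ((Nmat d crep w * (A' w)⁻¹) *ᵥ x) ⬝ᵥ ((Nmat d crep w * (A' w)⁻¹) *ᵥ x) < x ⬝ᵥ x := by
    intro w hw x hx0
    have hwd := hA'det w hw.1 hw.2.1 hw.2.2.1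
    set y := (A' w)⁻¹ *ᵥ x with hy
    have hxy : (A' w) *ᵥ y = x := by
      rw [hy, Matrix.mulVec_mulVec, Matrix.mul_nonsing_inv _ (isUnit_iff_ne_zero.mpr hwd),
        Matrix.one_mulVec]
    have hyne : y ≠ 0 := by
      intro h
      rw [h, Matrix.mulVec_zero] at hxy
      exact hx0 hxy.symm
    have hR := posdef_cast' _ (hGramSymm w) (hGram w hw.2.1 hw.2.2.1) y hyne
    rw [hMreal w w hw.1 hw.1, hAA w w, Matrix.sub_mulVec, dotProduct_sub] at hR
    have h1 : y ⬝ᵥ (((A' w)ᵀ * (A' w)) *ᵥ y) = x ⬝ᵥ x := by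
      rw [← Matrix.mulVec_mulVec, Matrix.dotProduct_mulVec, Matrix.vecMul_transpose, hxy]
    have h2 : y ⬝ᵥ (((Nmat d crep w)ᵀ * (Nmat d crep w)) *ᵥ y)
        = ((Nmat d crep w) *ᵥ y) ⬝ᵥ ((Nmat d crep w) *ᵥ y) := by
      rw [← Matrix.mulVec_mulVec, Matrix.dotProduct_mulVec, Matrix.vecMul_transpose]
    rw [h1, h2] at hR
    have hNy : (Nmat d crep w * (A' w)⁻¹) *ᵥ x = (Nmat d crep w) *ᵥ y := by
      rw [← Matrix.mulVec_mulVec, hy]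
    rw [hNy]
    linarith
  refine ⟨hcard, ⟨w₀, hw₀max⟩, fun u => (A' u).det, ?_⟩
  intro u v hu hv
  have hud := hA'det u hu.1 hu.2.1 hu.2.2.1
  have hvd := hA'det v hv.1 hv.2.1 hv.2.2.1
  set X := Nmat d crep u * (A' u)⁻¹ with hXdef
  set Y := Nmat d crep v * (A' v)⁻¹ with hYdef
  have hXA : (A' u)ᵀ * Xᵀ = (Nmat d crep u)ᵀ := by
    rw [hXdef, Matrix.transpose_mul, ← Matrix.mul_assoc, ← Matrix.transpose_mul,
      Matrix.nonsing_inv_mul _ (isUnit_iff_ne_zero.mpr hud), Matrix.transpose_one,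
      Matrix.one_mul]
  have hYA : Y * (A' v) = Nmat d crep v := by
    rw [hYdef, Matrix.mul_assoc, Matrix.nonsing_inv_mul _ (isUnit_iff_ne_zero.mpr hvd),
      Matrix.mul_one]
  have hfact : ((Matrix.of fun i j => B (u i) (v j)).map ((↑) : ℚ → ℝ))
      = (A' u)ᵀ * ((1 : Matrix (Fin r) (Fin r) ℝ) - Xᵀ * Y) * (A' v) := by
    rw [hMreal u v hu.1 hv.1, hAA u v, Matrix.mul_sub, Matrix.sub_mul, Matrix.mul_one]
    congr 1
    rw [← Matrix.mul_assoc, hXA, Matrix.mul_assoc, hYA]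
  have hL := det_one_sub_pos' X Y (hcontr u hu) (hcontr v hv)
  have hcastdet : (((Matrix.of fun i j => B (u i) (v j)).det : ℚ) : ℝ)
      = ((Matrix.of fun i j => B (u i) (v j)).map ((↑) : ℚ → ℝ)).det := by
    have hc := RingHom.map_det (Rat.castHom ℝ) (Matrix.of fun i j => B (u i) (v j))
    rw [RingHom.mapMatrix_apply] at hc
    exact hc
  rw [hcastdet, hfact, Matrix.det_mul, Matrix.det_mul, Matrix.det_transpose]
  have hkey : (A' u).det * (A' v).det *
      ((A' u).det * ((1 - Xᵀ * Y).det) * (A' v).det)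
      = ((A' u).det * (A' v).det)^2 * (1 - Xᵀ * Y).det := by ring
  rw [hkey]
  exact mul_pos (lt_of_le_of_ne (sq_nonneg _) (Ne.symm (pow_ne_zero 2 (mul_ne_zero hud hvd)))) hL

variable {V : Type*} [AddCommGroup V] [Module ℚ V]

private lemma len_eq {B : V → V → ℚ} {W : Submodule ℚ V} {p q : ℕ}
    {u : Fin p → V} {w : Fin q → V}
    (hu : IsMaxPos B W u) (hw : IsMaxPos B W w) : p = q :=
  le_antisymm (hw.2.2.2 p u hu.1 hu.2.1 hu.2.2.1) (hu.2.2.2 q w hw.1 hw.2.1 hw.2.2.1)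

private lemma maxpos_comp (B : V →ₗ[ℚ] V →ₗ[ℚ] ℚ) (W : Submodule ℚ V) (g : V ≃ₗ[ℚ] V)
    (hgB : ∀ v w, B (g v) (g w) = B v w) (hgW : ∀ x ∈ W, g x ∈ W)
    {p : ℕ} (u : Fin p → V) (hu : IsMaxPos (fun a b => B a b) W u) :
    IsMaxPos (fun a b => B a b) W (fun i => g (u i)) := by
  refine ⟨fun i => hgW _ (hu.1 i), ?_, ?_, fun q t hm hl hp => hu.2.2.2 q t hm hl hp⟩
  · exact hu.2.1.map' g.toLinearMap (LinearMap.ker_eq_bot.mpr g.injective)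
  · intro v hv hvne
    obtain ⟨c, hc⟩ := (Submodule.mem_span_range_iff_exists_fun ℚ).mp hv
    have hform : v = g (∑ i, c i • u i) := by
      rw [← hc]; simp [map_sum, _root_.map_smul]
    have hwmem : (∑ i, c i • u i) ∈ Submodule.span ℚ (Set.range u) :=
      Submodule.sum_mem _ fun i _ =>
        Submodule.smul_mem _ _ (Submodule.subset_span ⟨i, rfl⟩)
    have hwne : (∑ i, c i • u i) ≠ 0 := by
      intro h; exact hvne (by rw [hform, h, map_zero])
    rw [hform]
    have := hu.2.2.1 _ hwmem hwne
    simpa only [hgB] using this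

private lemma sign_transfer {a b c d x y z : ℝ} (h1 : 0 < a*b*x) (h2 : 0 < c*d*y)
    (h3 : 0 < b*d*z) (h4 : 0 < a*c*z) (hy : 0 < y) : 0 < x := by
  have hz : z ≠ 0 := by rintro rfl; rw [mul_zero] at h4; exact lt_irrefl 0 h4
  have hz2 : 0 < z^2 := by positivity
  have hK : 0 < (a*b)*(c*d) := by
    by_contra hK
    push_neg at hK
    have h34 := mul_pos h3 h4
    nlinarith
  have hxy : 0 < x*y := by
    by_contra hxy
    push_neg at hxy
    have h12 := mul_pos h1 h2
    nlinarith
  by_contra hx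
  push_neg at hx
  nlinarith

private lemma oriPres_iff (B : V →ₗ[ℚ] V →ₗ[ℚ] ℚ) (W : Submodule ℚ V) (g : V ≃ₗ[ℚ] V)
    (hgB : ∀ v w, B (g v) (g w) = B v w) (hgW : ∀ x ∈ W, g x ∈ W)
    {r : ℕ} (w₀ : Fin r → V) (hw₀ : IsMaxPos (fun a b => B a b) W w₀)
    (ε : (Fin r → V) → ℝ)
    (hε : ∀ u v, IsMaxPos (fun a b => B a b) W u → IsMaxPos (fun a b => B a b) W v →
      0 < ε u * ε v * (((Matrix.of fun i j => B (u i) (v j)).det : ℚ) : ℝ)) :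
    OriPres (fun a b => B a b) W g ↔
      0 < (Matrix.of fun i j => B (w₀ i) (g (w₀ j))).det := by
  constructor
  · intro h; exact h r w₀ hw₀
  · intro h p u hu
    have hpr : p = r := len_eq hu hw₀
    subst hpr
    have hgu := maxpos_comp B W g hgB hgW u hu
    have hgw := maxpos_comp B W g hgB hgW w₀ hw₀
    have h1 := hε u (fun i => g (u i)) hu hgu
    have h2 := hε w₀ (fun i => g (w₀ i)) hw₀ hgw
    have h3 := hε (fun i => g (u i)) (fun i => g (w₀ i)) hgu hgw
    have h4 := hε u w₀ hu hw₀
    have hMg : (Matrix.of fun i j => B (g (u i)) (g (w₀ j)))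
        = (Matrix.of fun i j => B (u i) (w₀ j)) := by
      ext i j; exact hgB _ _
    rw [hMg] at h3
    have hgoal : (0:ℝ) < (((Matrix.of fun i j => B (u i) (g (u j))).det : ℚ) : ℝ) := by
      refine sign_transfer h1 h2 h3 h4 ?_
      exact_mod_cast h
    exact_mod_cast hgoal

private lemma ortho_family [FiniteDimensional ℚ V] (B : V →ₗ[ℚ] V →ₗ[ℚ] ℚ)
    (hsymm : ∀ v w, B v w = B w v) (W : Submodule ℚ V)
    (hnd : ∀ x ∈ W, (∀ y ∈ W, B x y = 0) → x = 0) :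
    ∃ (n : ℕ) (f : Fin n → V), (∀ k, f k ∈ W) ∧ LinearIndependent ℚ f ∧
      W ≤ Submodule.span ℚ (Set.range f) ∧ (∀ k l, k ≠ l → B (f k) (f l) = 0) ∧
      (∀ k, B (f k) (f k) ≠ 0) := by
  have hBs : LinearMap.IsSymm (LinearMap.BilinForm.restrict B W) := by
    refine ⟨fun x y => ?_⟩
    simp [LinearMap.BilinForm.restrict_apply, hsymm]
  obtain ⟨b, hb⟩ := LinearMap.BilinForm.exists_orthogonal_basis hBs
  have hspan : Submodule.span ℚ (Set.range fun k => ((b k : V))) = W := by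
    have h1 : (Set.range fun k => ((b k : V))) = W.subtype '' Set.range b := by
      ext x; constructor
      · rintro ⟨k, rfl⟩; exact ⟨b k, ⟨k, rfl⟩, rfl⟩
      · rintro ⟨y, ⟨k, rfl⟩, rfl⟩; exact ⟨k, rfl⟩
    rw [h1, Submodule.span_image, Module.Basis.span_eq, Submodule.map_subtype_top]
  have hortho : ∀ k l, k ≠ l → B ((b k : V)) ((b l : V)) = 0 := by
    intro k l hkl
    have := hb hkl
    simpa [LinearMap.BilinForm.restrict_apply] using this
  refine ⟨Module.finrank ℚ ↥W, fun k => (b k : V), fun k => (b k).2,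
    b.linearIndependent.map' W.subtype (Submodule.ker_subtype W),
    le_of_eq hspan.symm, hortho, ?_⟩
  intro k hk0
  have hall : ∀ y ∈ W, B ((b k : V)) y = 0 := by
    intro y hy
    have hrepr := Module.Basis.sum_repr b ⟨y, hy⟩
    have hy2 : y = ∑ l, b.repr ⟨y, hy⟩ l • ((b l : V)) := by
      calc y = ((∑ l, b.repr ⟨y, hy⟩ l • b l : W) : V) := by rw [hrepr]
      _ = ∑ l, b.repr ⟨y, hy⟩ l • ((b l : V)) := by
          push_cast; rfl
    rw [hy2, map_sum]
    refine Finset.sum_eq_zero fun l _ => ?_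
    rw [_root_.map_smul, smul_eq_mul]
    rcases eq_or_ne k l with rfl | hkl
    · rw [hk0, mul_zero]
    · rw [hortho k l hkl, mul_zero]
  have := hnd _ (b k).2 hall
  exact b.ne_zero k (by exact_mod_cast this)

end Aux

/-- Let `Λ` be an even lattice of signature `(p,q)` with `p > 1` (a full
even lattice in a `ℚ`-quadratic space admitting a 2-dimensional positive-definite
subspace), and let `Λ' ⊆ Λ` be a nondegenerate sublattice of signature `(p',q')` with
`p' ≥ 1` such that the embedding `O(Λ') ↪ O(Λ)` extending isometries by the identity on
`(Λ')^⊥` is defined.  Then an isometry `g` of `Λ'` (here: an isometry of the ambient space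
preserving `Λ` and `Λ'` and equal to the identity on the orthogonal complement of `Λ'`) is
orientation preserving on `Λ'` if and only if its extension is orientation preserving on
`Λ`: the orientation character of `Λ` restricts to that of `Λ'`. -/
theorem stmt16 {V : Type*} [AddCommGroup V] [Module ℚ V] [FiniteDimensional ℚ V]
    (B : V →ₗ[ℚ] V →ₗ[ℚ] ℚ)
    (hsymm : ∀ v w, B v w = B w v)
    (hnondeg : ∀ v, (∀ w, B v w = 0) → v = 0)
    (Λ Λ' : Submodule ℤ V) (hle : Λ' ≤ Λ)
    (hfull : Submodule.span ℚ (Λ : Set V) = ⊤)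
    (hint : ∀ v ∈ Λ, ∀ w ∈ Λ, ∃ n : ℤ, B v w = (n : ℚ))
    (heven : ∀ v ∈ Λ, ∃ n : ℤ, B v v = 2 * (n : ℚ))
    (hp : ∃ w : Fin 2 → V, LinearIndependent ℚ w ∧
      ∀ v ∈ Submodule.span ℚ (Set.range w), v ≠ 0 → 0 < B v v)
    (hp' : ∃ v ∈ Submodule.span ℚ (Λ' : Set V), 0 < B v v)
    (hnondeg' : ∀ x ∈ Submodule.span ℚ (Λ' : Set V), (∀ y ∈ Λ', B x y = 0) → x = 0)
    (g : V ≃ₗ[ℚ] V)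
    (hgB : ∀ v w, B (g v) (g w) = B v w)
    (hgΛ' : Submodule.map (g.toLinearMap.restrictScalars ℤ) Λ' = Λ')
    (hgΛ : Submodule.map (g.toLinearMap.restrictScalars ℤ) Λ = Λ)
    (hgid : ∀ x, (∀ y ∈ Λ', B x y = 0) → g x = x) :
    OriPres (fun v w => B v w) ⊤ g ↔
      OriPres (fun v w => B v w) (Submodule.span ℚ (Λ' : Set V)) g := by
  classical
  set W' : Submodule ℚ V := Submodule.span ℚ (Λ' : Set V) with hW'def
  -- basic nondegeneracy facts
  have hndW' : ∀ x ∈ W', (∀ y ∈ W', B x y = 0) → x = 0 := by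
    intro x hx h
    exact hnondeg' x hx fun y hy => h y (Submodule.subset_span hy)
  have hrefl : B.IsRefl := fun x y h => by rw [hsymm]; exact h
  have hres : (LinearMap.BilinForm.restrict B W').Nondegenerate := by
    refine ⟨fun x h => ?_, fun x h => ?_⟩
    · have := hndW' x.1 x.2 fun y hy => h ⟨y, hy⟩
      exact Subtype.ext this
    · have := hndW' x.1 x.2 fun y hy => by rw [hsymm]; exact h ⟨y, hy⟩
      exact Subtype.ext this
  set W'' : Submodule ℚ V := LinearMap.BilinForm.orthogonal B W' with hW''def
  have hcompl : IsCompl W' W'' :=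
    LinearMap.BilinForm.isCompl_orthogonal_of_restrict_nondegenerate hrefl hres
  have hmemW'' : ∀ x, x ∈ W'' ↔ ∀ n ∈ W', B n x = 0 := by
    intro x
    exact LinearMap.BilinForm.mem_orthogonal_iff
  have hndW'' : ∀ x ∈ W'', (∀ y ∈ W'', B x y = 0) → x = 0 := by
    intro x hx h
    apply hnondeg
    intro w
    have hw : w ∈ W' ⊔ W'' := by rw [hcompl.sup_eq_top]; trivial
    obtain ⟨a, ha, b, hb, rfl⟩ := Submodule.mem_sup.mp hw
    have h1 : B x a = 0 := by rw [hsymm]; exact (hmemW'' x).mp hx a ha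
    have h2 : B x b = 0 := h b hb
    rw [map_add, h1, h2, add_zero]
  have hndTop : ∀ x ∈ (⊤ : Submodule ℚ V), (∀ y ∈ (⊤ : Submodule ℚ V), B x y = 0) → x = 0 :=
    fun x _ h => hnondeg x fun w => h w trivial
  -- g facts
  have hgΛ'set : ∀ y ∈ Λ', g y ∈ Λ' := by
    intro y hy
    have : g y ∈ Submodule.map (g.toLinearMap.restrictScalars ℤ) Λ' :=
      Submodule.mem_map_of_mem hy
    rwa [hgΛ'] at this
  have hgW' : ∀ x ∈ W', g x ∈ W' := by
    intro x hx
    induction hx using Submodule.span_induction with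
    | mem y hy => exact Submodule.subset_span (hgΛ'set y hy)
    | zero => rw [map_zero]; exact Submodule.zero_mem _
    | add a b _ _ ha hb => rw [map_add]; exact Submodule.add_mem _ ha hb
    | smul q a _ ha => rw [_root_.map_smul]; exact Submodule.smul_mem _ q ha
  have hfix : ∀ x ∈ W'', g x = x := by
    intro x hx
    apply hgid
    intro y hy
    rw [hsymm]
    exact (hmemW'' x).mp hx y (Submodule.subset_span hy)
  -- orthogonal families
  obtain ⟨n1, f1, hf1mem, hf1li, hf1span, hf1o, hf1d⟩ := ortho_family B hsymm W' hndW'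
  obtain ⟨n2, f2, hf2mem, hf2li, hf2span, hf2o, hf2d⟩ := ortho_family B hsymm W'' hndW''
  set r1 := Fintype.card {k : Fin n1 // 0 < B (f1 k) (f1 k)} with hr1def
  set r2 := Fintype.card {k : Fin n2 // 0 < B (f2 k) (f2 k)} with hr2def
  obtain ⟨hcard1, ⟨w1, hw1⟩, ⟨ε1, hε1⟩⟩ :=
    master B hsymm W' f1 hf1mem hf1li hf1span hf1o hf1d
  obtain ⟨hcard2, ⟨w2, hw2⟩, ⟨ε2, hε2⟩⟩ :=
    master B hsymm W'' f2 hf2mem hf2li hf2span hf2o hf2d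
  -- the top family
  set fT : Fin n1 ⊕ Fin n2 → V := Sum.elim f1 f2 with hfTdef
  have hfTmem : ∀ k, fT k ∈ (⊤ : Submodule ℚ V) := fun k => trivial
  have hsp1 : Submodule.span ℚ (Set.range f1) ≤ W' := by
    rw [Submodule.span_le]; rintro _ ⟨k, rfl⟩; exact hf1mem k
  have hsp2 : Submodule.span ℚ (Set.range f2) ≤ W'' := by
    rw [Submodule.span_le]; rintro _ ⟨k, rfl⟩; exact hf2mem k
  have hfTli : LinearIndependent ℚ fT :=
    hf1li.sum_type hf2li (hcompl.disjoint.mono hsp1 hsp2)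
  have hfTspan : (⊤ : Submodule ℚ V) ≤ Submodule.span ℚ (Set.range fT) := by
    rw [hfTdef, Set.Sum.elim_range, Submodule.span_union]
    rw [← hcompl.sup_eq_top]
    exact sup_le_sup (hf1span) (hf2span)
  have hW'W''ortho : ∀ a ∈ W', ∀ b ∈ W'', B a b = 0 := by
    intro a ha b hb
    exact (hmemW'' b).mp hb a ha
  have hfTo : ∀ k l, k ≠ l → B (fT k) (fT l) = 0 := by
    rintro (k | k) (l | l) hkl
    · exact hf1o k l (by simpa using hkl)
    · exact hW'W''ortho _ (hf1mem k) _ (hf2mem l)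
    · rw [hsymm]; exact hW'W''ortho _ (hf1mem l) _ (hf2mem k)
    · exact hf2o k l (by simpa using hkl)
  have hfTd : ∀ k, B (fT k) (fT k) ≠ 0 := by
    rintro (k | k)
    · exact hf1d k
    · exact hf2d k
  have hmTop := master B hsymm ⊤ fT hfTmem hfTli hfTspan hfTo hfTd
  have hcardsum : Fintype.card {k : Fin n1 ⊕ Fin n2 // 0 < B (fT k) (fT k)} = r1 + r2 := by
    rw [Fintype.card_congr (Equiv.subtypeSum
      (p := fun k : Fin n1 ⊕ Fin n2 => 0 < B (fT k) (fT k))), Fintype.card_sum]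
    congr 1
  rw [hcardsum] at hmTop
  obtain ⟨hcardT, -, ⟨εT, hεT⟩⟩ := hmTop
  -- the concatenated tuple
  set wcat : Fin (r1 + r2) → V := Fin.append w1 w2 with hwcat
  have happ : ∀ i : Fin (r1 + r2), wcat i = Sum.elim w1 w2 (finSumFinEquiv.symm i) := by
    intro i
    rcases h : finSumFinEquiv.symm i with k | k
    · have hi : i = finSumFinEquiv (Sum.inl k) := by rw [← h, Equiv.apply_symm_apply]
      subst hi
      show Fin.append w1 w2 (finSumFinEquiv (Sum.inl k)) = w1 k
      rw [finSumFinEquiv_apply_left]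
      exact Fin.append_left w1 w2 k
    · have hi : i = finSumFinEquiv (Sum.inr k) := by rw [← h, Equiv.apply_symm_apply]
      subst hi
      show Fin.append w1 w2 (finSumFinEquiv (Sum.inr k)) = w2 k
      rw [finSumFinEquiv_apply_right]
      exact Fin.append_right w1 w2 k
  have hwfun : wcat = Sum.elim w1 w2 ∘ finSumFinEquiv.symm := funext happ
  have hspw1 : Submodule.span ℚ (Set.range w1) ≤ W' := by
    rw [Submodule.span_le]; rintro _ ⟨k, rfl⟩; exact hw1.1 k
  have hspw2 : Submodule.span ℚ (Set.range w2) ≤ W'' := by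
    rw [Submodule.span_le]; rintro _ ⟨k, rfl⟩; exact hw2.1 k
  have hcatmax : IsMaxPos (fun a b => B a b) (⊤ : Submodule ℚ V) wcat := by
    refine ⟨fun i => trivial, ?_, ?_, fun q t hm hl hp => hcardT q t hm hl hp⟩
    · rw [hwfun]
      exact (hw1.2.1.sum_type hw2.2.1 (hcompl.disjoint.mono hspw1 hspw2)).comp
        _ finSumFinEquiv.symm.injective
    · intro v hv hvne
      have hrange : Set.range wcat = Set.range w1 ∪ Set.range w2 := by
        rw [hwfun, Set.range_comp, Equiv.range_eq_univ, Set.image_univ, Set.Sum.elim_range]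
      rw [hrange, Submodule.span_union] at hv
      obtain ⟨a, ha, b, hb, rfl⟩ := Submodule.mem_sup.mp hv
      have haW : a ∈ W' := hspw1 ha
      have hbW : b ∈ W'' := hspw2 hb
      have hab : B a b = 0 := hW'W''ortho a haW b hbW
      have hba : B b a = 0 := by rw [hsymm]; exact hab
      have hexp : B (a + b) (a + b) = B a a + B b b := by
        simp only [map_add, LinearMap.add_apply, hab, hba]
        ring
      show 0 < B (a + b) (a + b)
      rw [hexp]
      rcases eq_or_ne a 0 with rfl | ha0
      · rcases eq_or_ne b 0 with rfl | hb0
        · exact absurd (by simp) hvne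
        · have := hw2.2.2.1 b hb hb0
          simpa using this
      · have h1 : 0 < B a a := hw1.2.2.1 a ha ha0
        rcases eq_or_ne b 0 with rfl | hb0
        · simpa using h1
        · have h2 : 0 < B b b := hw2.2.2.1 b hb hb0
          linarith
  -- block determinant
  have hM2fix : ∀ j, g (w2 j) = w2 j := fun j => hfix _ (hw2.1 j)
  have hblock : (Matrix.of fun i j => B (wcat i) (g (wcat j))).det
      = (Matrix.of fun i j => B (w1 i) (g (w1 j))).det *
        (Matrix.of fun i j => B (w2 i) (w2 j)).det := by
    have hsub : ((Matrix.of fun i j => B (wcat i) (g (wcat j))).submatrix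
          finSumFinEquiv finSumFinEquiv)
        = Matrix.fromBlocks (Matrix.of fun i j => B (w1 i) (g (w1 j))) 0 0
            (Matrix.of fun i j => B (w2 i) (w2 j)) := by
      ext i j
      rcases i with i | i <;> rcases j with j | j <;>
        simp only [Matrix.submatrix_apply, finSumFinEquiv_apply_left,
          finSumFinEquiv_apply_right, Matrix.of_apply, Matrix.fromBlocks_apply₁₁,
          Matrix.fromBlocks_apply₁₂, Matrix.fromBlocks_apply₂₁, Matrix.fromBlocks_apply₂₂,
          hwcat, Fin.append_left, Fin.append_right, Matrix.zero_apply]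
      · rw [hM2fix j]
        exact hW'W''ortho _ (hw1.1 i) _ (hw2.1 j)
      · rw [hsymm]
        exact hW'W''ortho _ (hgW' _ (hw1.1 j)) _ (hw2.1 i)
      · rw [hM2fix j]
    calc (Matrix.of fun i j => B (wcat i) (g (wcat j))).det
        = ((Matrix.of fun i j => B (wcat i) (g (wcat j))).submatrix
            finSumFinEquiv finSumFinEquiv).det :=
          (Matrix.det_submatrix_equiv_self _ _).symm
      _ = _ := by rw [hsub, Matrix.det_fromBlocks_zero₂₁]
  -- positivity of the W'' Gram determinant
  have hM2pos : 0 < (Matrix.of fun i j => B (w2 i) (w2 j)).det := by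
    have h22 := hε2 w2 w2 hw2 hw2
    by_contra hD
    push_neg at hD
    have hD' : (((Matrix.of fun i j => B (w2 i) (w2 j)).det : ℚ) : ℝ) ≤ 0 := by
      exact_mod_cast hD
    nlinarith [sq_nonneg (ε2 w2)]
  -- conclude
  have hTop := oriPres_iff B ⊤ g hgB (fun x _ => trivial) wcat hcatmax εT hεT
  have hW'iff := oriPres_iff B W' g hgB hgW' w1 hw1 ε1 hε1
  rw [hTop, hW'iff, hblock]
  constructor
  · intro hh
    by_contra h1
    push_neg at h1
    nlinarith
  · intro hh
    exact mul_pos hh hM2pos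
end
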